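/- arXiv:1309.0832 — 3 statements merged into one kernel-verified Lean document; each statement's English description precedes it below -/
import Mathlib

section
/- Every permutation belonging to G1 or to G2 avoids both of the patterns 3124 and 4312; that is, G1 ∪ G2 ⊆ Av(3124,4312). -/
/-!  Common definitions: permutations in one-line notation (0-based values),
pattern containment, intervals, simplicity, sums, inflations, drawings on figures,
and counting functions. -/

/-- `l` is a permutation in one-line notation, using each of the values `0,…,n-1`
exactly once, where `n = l.length`. -/
def IsPermList (l : List ℕ) : Prop := List.Perm l (List.range l.length)

/-- `l` contains the pattern `p` (both in one-line notation). -/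
def Contains (l p : List ℕ) : Prop :=
  ∃ f : Fin p.length → Fin l.length, StrictMono f ∧
    ∀ a b : Fin p.length, p.get a < p.get b ↔ l.get (f a) < l.get (f b)

/-- `l` avoids the pattern `p`. -/
def Avoids (l p : List ℕ) : Prop := ¬ Contains l p

/-- The `k` consecutive indices `i,…,i+k-1` form an interval of `l`:
the corresponding entries form a set of consecutive integers. -/
def IsIntervalAt (l : List ℕ) (i k : ℕ) : Prop :=
  0 < k ∧ i + k ≤ l.length ∧
    ∃ m : ℕ, List.Perm ((l.drop i).take k) ((List.range k).map (· + m))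

/-- A permutation is simple if its only intervals have length `1` or `l.length`. -/
def IsSimple (l : List ℕ) : Prop :=
  ∀ i k, IsIntervalAt l i k → k = 1 ∨ k = l.length

/-- The (direct) sum `σ ⊕ τ`. -/
def psum (σ τ : List ℕ) : List ℕ := σ ++ τ.map (· + σ.length)

/-- The skew sum `σ ⊖ τ`. -/
def pskew (σ τ : List ℕ) : List ℕ := σ.map (· + τ.length) ++ τ

/-- `l` is sum decomposable. -/
def SumDecomposable (l : List ℕ) : Prop :=
  ∃ σ τ : List ℕ, IsPermList σ ∧ IsPermList τ ∧ σ ≠ [] ∧ τ ≠ [] ∧ l = psum σ τ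

/-- `l` is skew decomposable. -/
def SkewDecomposable (l : List ℕ) : Prop :=
  ∃ σ τ : List ℕ, IsPermList σ ∧ IsPermList τ ∧ σ ≠ [] ∧ τ ≠ [] ∧ l = pskew σ τ

/-- The inflation `σ[τ₁,…,τ_k]`: each entry `σ(i)` is replaced by a block
order-isomorphic to `τs[i]`, the blocks being mutually ordered as the entries of `σ`. -/
def inflation (σ : List ℕ) (τs : List (List ℕ)) : List ℕ :=
  ((List.range σ.length).map (fun i =>
    (τs.getD i []).map (· +
      (((List.range σ.length).filter (fun j => decide (σ.getD j 0 < σ.getD i 0))).map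
        (fun j => (τs.getD j []).length)).sum))).flatten

/-- `l = σ[τ₁,…,τ_k]` where the `τᵢ` are nonempty permutations. -/
def IsInflationOf (l σ : List ℕ) (τs : List (List ℕ)) : Prop :=
  τs.length = σ.length ∧ (∀ τ ∈ τs, IsPermList τ ∧ τ ≠ []) ∧ l = inflation σ τs

/-- `l` can be drawn on the plane figure `F`:  there are points of `F`, with pairwise
distinct x-coordinates, listed from left to right, whose y-coordinates are ordered
exactly as the entries of `l`. -/
def DrawnOn (l : List ℕ) (F : Set (ℝ × ℝ)) : Prop :=
  ∃ p : Fin l.length → ℝ × ℝ, (∀ i, p i ∈ F) ∧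
    (StrictMono fun i => (p i).1) ∧
    ∀ i j : Fin l.length, l.get i < l.get j ↔ (p i).2 < (p j).2

/-- The line segment between two points of the plane. -/
def seg (a b : ℝ × ℝ) : Set (ℝ × ℝ) := segment ℝ a b

/-- The standard figure of `G1`. -/
def G1fig : Set (ℝ × ℝ) :=
  seg (0,0) (1,1) ∪ seg (1,1) (2,2) ∪ seg (1,1) (2,0) ∪ seg (2,2) (3,1)

/-- The standard figure of `G2`. -/
def G2fig : Set (ℝ × ℝ) :=
  seg (0,0) (1,1) ∪ seg (1,1) (2,2) ∪ seg (2,3) (3,4) ∪ seg (3,2) (4,3) ∪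
    seg (2,2) (3,1) ∪ seg (3,1) (4,0)

/-- The standard figure of `G3`. -/
def G3fig : Set (ℝ × ℝ) :=
  seg (0,0) (1,1) ∪ seg (1,2) (2,3) ∪ seg (1,1) (2,0) ∪ {((5/2 : ℝ), (3/2 : ℝ))}

/-- The number of permutations of length `n` avoiding `3124` and `4312`. -/
noncomputable def avCount (n : ℕ) : ℕ :=
  {l : List ℕ | l.length = n ∧ IsPermList l ∧
    Avoids l [2,0,1,3] ∧ Avoids l [3,2,0,1]}.ncard

/-- The number of simple permutations of length `n` avoiding `3124` and `4312`. -/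
noncomputable def simpleAvCount (n : ℕ) : ℕ :=
  {l : List ℕ | l.length = n ∧ IsPermList l ∧ IsSimple l ∧
    Avoids l [2,0,1,3] ∧ Avoids l [3,2,0,1]}.ncard

/-- The number of permutations of length `n` in the class `G1`. -/
noncomputable def g1Count (n : ℕ) : ℕ :=
  {l : List ℕ | l.length = n ∧ IsPermList l ∧ DrawnOn l G1fig}.ncard

/-- The number of permutations of length `n` in the class `G2`. -/
noncomputable def g2Count (n : ℕ) : ℕ :=
  {l : List ℕ | l.length = n ∧ IsPermList l ∧ DrawnOn l G2fig}.ncard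

/-- The number of permutations of length `n` in the class `G3`. -/
noncomputable def g3Count (n : ℕ) : ℕ :=
  {l : List ℕ | l.length = n ∧ IsPermList l ∧ DrawnOn l G3fig}.ncard

/-- The number of simple permutations of length `n` in the class `G1`. -/
noncomputable def simpleG1Count (n : ℕ) : ℕ :=
  {l : List ℕ | l.length = n ∧ IsPermList l ∧ IsSimple l ∧ DrawnOn l G1fig}.ncard

/-- The number of simple permutations of length `n` in the class `G2`. -/
noncomputable def simpleG2Count (n : ℕ) : ℕ :=
  {l : List ℕ | l.length = n ∧ IsPermList l ∧ IsSimple l ∧ DrawnOn l G2fig}.ncard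

/-- The number of simple permutations of length `n` in the class `G3`. -/
noncomputable def simpleG3Count (n : ℕ) : ℕ :=
  {l : List ℕ | l.length = n ∧ IsPermList l ∧ IsSimple l ∧ DrawnOn l G3fig}.ncard

/-- The number of sum decomposable permutations of length `n` avoiding `3124` and `4312`. -/
noncomputable def sumDecAvCount (n : ℕ) : ℕ :=
  {l : List ℕ | l.length = n ∧ IsPermList l ∧ SumDecomposable l ∧
    Avoids l [2,0,1,3] ∧ Avoids l [3,2,0,1]}.ncard

/-- The number of skew decomposable permutations of length `n` avoiding `3124` and `4312`. -/
noncomputable def skewDecAvCount (n : ℕ) : ℕ :=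
  {l : List ℕ | l.length = n ∧ IsPermList l ∧ SkewDecomposable l ∧
    Avoids l [2,0,1,3] ∧ Avoids l [3,2,0,1]}.ncard

lemma mem_seg {a1 a2 b1 b2 : ℝ} {p : ℝ × ℝ} (h : p ∈ seg (a1, a2) (b1, b2)) :
    ∃ t : ℝ, 0 ≤ t ∧ t ≤ 1 ∧ p.1 = (1 - t) * a1 + t * b1 ∧ p.2 = (1 - t) * a2 + t * b2 := by
  obtain ⟨u, v, hu, hv, huv, h⟩ := h
  have hu' : u = 1 - v := by linarith
  refine ⟨v, hv, by linarith, ?_, ?_⟩ <;>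
  · rw [← h, hu']; simp [Prod.smul_def, Prod.fst_add, Prod.snd_add, smul_eq_mul]

lemma mem_G1 {p : ℝ × ℝ} (h : p ∈ G1fig) :
    (p.2 = p.1 ∧ 0 ≤ p.1 ∧ p.1 ≤ 2) ∨ (p.2 = 2 - p.1 ∧ 1 ≤ p.1 ∧ p.1 ≤ 2) ∨
      (p.2 = 4 - p.1 ∧ 2 ≤ p.1 ∧ p.1 ≤ 3) := by
  rcases h with ((h | h) | h) | h <;> obtain ⟨t, ht0, ht1, hx, hy⟩ := mem_seg h
  · exact Or.inl ⟨by linarith, by linarith, by linarith⟩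
  · exact Or.inl ⟨by linarith, by linarith, by linarith⟩
  · exact Or.inr (Or.inl ⟨by linarith, by linarith, by linarith⟩)
  · exact Or.inr (Or.inr ⟨by linarith, by linarith, by linarith⟩)

lemma mem_G2 {p : ℝ × ℝ} (h : p ∈ G2fig) :
    (p.2 = p.1 ∧ 0 ≤ p.1 ∧ p.1 ≤ 2) ∨ (p.2 = p.1 + 1 ∧ 2 ≤ p.1 ∧ p.1 ≤ 3) ∨
      (p.2 = p.1 - 1 ∧ 3 ≤ p.1 ∧ p.1 ≤ 4) ∨ (p.2 = 4 - p.1 ∧ 2 ≤ p.1 ∧ p.1 ≤ 4) := by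
  rcases h with ((((h | h) | h) | h) | h) | h <;> obtain ⟨t, ht0, ht1, hx, hy⟩ := mem_seg h
  · exact Or.inl ⟨by linarith, by linarith, by linarith⟩
  · exact Or.inl ⟨by linarith, by linarith, by linarith⟩
  · exact Or.inr (Or.inl ⟨by linarith, by linarith, by linarith⟩)
  · exact Or.inr (Or.inr (Or.inl ⟨by linarith, by linarith, by linarith⟩))
  · exact Or.inr (Or.inr (Or.inr ⟨by linarith, by linarith, by linarith⟩))
  · exact Or.inr (Or.inr (Or.inr ⟨by linarith, by linarith, by linarith⟩))

set_option maxHeartbeats 2000000 in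
lemma G1_no3124 {a b c d : ℝ × ℝ} (ha : a ∈ G1fig) (hb : b ∈ G1fig) (hc : c ∈ G1fig)
    (hd : d ∈ G1fig) (x1 : a.1 < b.1) (x2 : b.1 < c.1) (x3 : c.1 < d.1)
    (y1 : b.2 < c.2) (y2 : c.2 < a.2) (y3 : a.2 < d.2) : False := by
  rcases mem_G1 ha with ⟨e1, f1, g1⟩ | ⟨e1, f1, g1⟩ | ⟨e1, f1, g1⟩ <;>
  rcases mem_G1 hb with ⟨e2, f2, g2⟩ | ⟨e2, f2, g2⟩ | ⟨e2, f2, g2⟩ <;>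
  rcases mem_G1 hc with ⟨e3, f3, g3⟩ | ⟨e3, f3, g3⟩ | ⟨e3, f3, g3⟩ <;>
  rcases mem_G1 hd with ⟨e4, f4, g4⟩ | ⟨e4, f4, g4⟩ | ⟨e4, f4, g4⟩ <;>
  linarith

set_option maxHeartbeats 2000000 in
lemma G1_no4312 {a b c d : ℝ × ℝ} (ha : a ∈ G1fig) (hb : b ∈ G1fig) (hc : c ∈ G1fig)
    (hd : d ∈ G1fig) (x1 : a.1 < b.1) (x2 : b.1 < c.1) (x3 : c.1 < d.1)
    (y1 : c.2 < d.2) (y2 : d.2 < b.2) (y3 : b.2 < a.2) : False := by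
  rcases mem_G1 ha with ⟨e1, f1, g1⟩ | ⟨e1, f1, g1⟩ | ⟨e1, f1, g1⟩ <;>
  rcases mem_G1 hb with ⟨e2, f2, g2⟩ | ⟨e2, f2, g2⟩ | ⟨e2, f2, g2⟩ <;>
  rcases mem_G1 hc with ⟨e3, f3, g3⟩ | ⟨e3, f3, g3⟩ | ⟨e3, f3, g3⟩ <;>
  rcases mem_G1 hd with ⟨e4, f4, g4⟩ | ⟨e4, f4, g4⟩ | ⟨e4, f4, g4⟩ <;>
  linarith

set_option maxHeartbeats 4000000 in
lemma G2_no3124 {a b c d : ℝ × ℝ} (ha : a ∈ G2fig) (hb : b ∈ G2fig) (hc : c ∈ G2fig)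
    (hd : d ∈ G2fig) (x1 : a.1 < b.1) (x2 : b.1 < c.1) (x3 : c.1 < d.1)
    (y1 : b.2 < c.2) (y2 : c.2 < a.2) (y3 : a.2 < d.2) : False := by
  rcases mem_G2 ha with ⟨e1, f1, g1⟩ | ⟨e1, f1, g1⟩ | ⟨e1, f1, g1⟩ | ⟨e1, f1, g1⟩ <;>
  rcases mem_G2 hb with ⟨e2, f2, g2⟩ | ⟨e2, f2, g2⟩ | ⟨e2, f2, g2⟩ | ⟨e2, f2, g2⟩ <;>
  rcases mem_G2 hc with ⟨e3, f3, g3⟩ | ⟨e3, f3, g3⟩ | ⟨e3, f3, g3⟩ | ⟨e3, f3, g3⟩ <;>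
  rcases mem_G2 hd with ⟨e4, f4, g4⟩ | ⟨e4, f4, g4⟩ | ⟨e4, f4, g4⟩ | ⟨e4, f4, g4⟩ <;>
  linarith

set_option maxHeartbeats 4000000 in
lemma G2_no4312 {a b c d : ℝ × ℝ} (ha : a ∈ G2fig) (hb : b ∈ G2fig) (hc : c ∈ G2fig)
    (hd : d ∈ G2fig) (x1 : a.1 < b.1) (x2 : b.1 < c.1) (x3 : c.1 < d.1)
    (y1 : c.2 < d.2) (y2 : d.2 < b.2) (y3 : b.2 < a.2) : False := by
  rcases mem_G2 ha with ⟨e1, f1, g1⟩ | ⟨e1, f1, g1⟩ | ⟨e1, f1, g1⟩ | ⟨e1, f1, g1⟩ <;>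
  rcases mem_G2 hb with ⟨e2, f2, g2⟩ | ⟨e2, f2, g2⟩ | ⟨e2, f2, g2⟩ | ⟨e2, f2, g2⟩ <;>
  rcases mem_G2 hc with ⟨e3, f3, g3⟩ | ⟨e3, f3, g3⟩ | ⟨e3, f3, g3⟩ | ⟨e3, f3, g3⟩ <;>
  rcases mem_G2 hd with ⟨e4, f4, g4⟩ | ⟨e4, f4, g4⟩ | ⟨e4, f4, g4⟩ | ⟨e4, f4, g4⟩ <;>
  linarith

lemma contains_points {l : List ℕ} {F : Set (ℝ × ℝ)} (h : DrawnOn l F) {pat : List ℕ}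
    (hc : Contains l pat) :
    ∃ q : Fin pat.length → ℝ × ℝ, (∀ i, q i ∈ F) ∧ (StrictMono fun i => (q i).1) ∧
      ∀ a b, pat.get a < pat.get b ↔ (q a).2 < (q b).2 := by
  obtain ⟨p, hpF, hx, hy⟩ := h
  obtain ⟨f, hf, hiff⟩ := hc
  exact ⟨fun i => p (f i), fun i => hpF _, hx.comp hf,
    fun a b => (hiff a b).trans (hy _ _)⟩

/-- every permutation of `G1 ∪ G2` avoids `3124` and `4312`. -/
theorem g1_union_g2_subset_av (l : List ℕ) (hl : IsPermList l)
    (h : DrawnOn l G1fig ∨ DrawnOn l G2fig) :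
    Avoids l [2,0,1,3] ∧ Avoids l [3,2,0,1] := by
  have key : ∀ F : Set (ℝ × ℝ),
      (∀ a b c d : ℝ × ℝ, a ∈ F → b ∈ F → c ∈ F → d ∈ F →
        a.1 < b.1 → b.1 < c.1 → c.1 < d.1 → b.2 < c.2 → c.2 < a.2 → a.2 < d.2 → False) →
      (∀ a b c d : ℝ × ℝ, a ∈ F → b ∈ F → c ∈ F → d ∈ F →
        a.1 < b.1 → b.1 < c.1 → c.1 < d.1 → c.2 < d.2 → d.2 < b.2 → b.2 < a.2 → False) →
      DrawnOn l F → Avoids l [2,0,1,3] ∧ Avoids l [3,2,0,1] := by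
    intro F hF1 hF2 hD
    constructor
    · intro hc
      obtain ⟨q, hqF, hqx, hqy⟩ := contains_points hD hc
      have i0 : Fin ([2,0,1,3] : List ℕ).length := ⟨0, by norm_num⟩
      exact hF1 (q ⟨0, by norm_num⟩) (q ⟨1, by norm_num⟩) (q ⟨2, by norm_num⟩)
        (q ⟨3, by norm_num⟩) (hqF _) (hqF _) (hqF _) (hqF _)
        (hqx (by decide)) (hqx (by decide)) (hqx (by decide))
        ((hqy ⟨1, by norm_num⟩ ⟨2, by norm_num⟩).mp (by decide))
        ((hqy ⟨2, by norm_num⟩ ⟨0, by norm_num⟩).mp (by decide))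
        ((hqy ⟨0, by norm_num⟩ ⟨3, by norm_num⟩).mp (by decide))
    · intro hc
      obtain ⟨q, hqF, hqx, hqy⟩ := contains_points hD hc
      exact hF2 (q ⟨0, by norm_num⟩) (q ⟨1, by norm_num⟩) (q ⟨2, by norm_num⟩)
        (q ⟨3, by norm_num⟩) (hqF _) (hqF _) (hqF _) (hqF _)
        (hqx (by decide)) (hqx (by decide)) (hqx (by decide))
        ((hqy ⟨2, by norm_num⟩ ⟨3, by norm_num⟩).mp (by decide))
        ((hqy ⟨3, by norm_num⟩ ⟨1, by norm_num⟩).mp (by decide))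
        ((hqy ⟨1, by norm_num⟩ ⟨0, by norm_num⟩).mp (by decide))
  rcases h with hD | hD
  · exact key G1fig (fun a b c d => G1_no3124) (fun a b c d => G1_no4312) hD
  · exact key G2fig (fun a b c d => G2_no3124) (fun a b c d => G2_no4312) hD
end

section
/- The class G3 is the intersection of the classes G1 and G2; that is, a permutation can be drawn on the figure defining G3 if and only if it can be drawn on both the figure defining G1 and the figure defining G2. -/
lemma memSeg (P : ℝ×ℝ) (x1 y1 x2 y2 : ℝ) :
    P ∈ seg (x1,y1) (x2,y2) ↔ ∃ t : ℝ, 0 ≤ t ∧ t ≤ 1 ∧ P = (x1 + t*(x2-x1), y1 + t*(y2-y1)) := by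
  unfold seg
  rw [segment_eq_image]
  constructor
  · rintro ⟨t, ht, rfl⟩
    exact ⟨t, ht.1, ht.2, by simp [Prod.ext_iff]; constructor <;> ring⟩
  · rintro ⟨t, h0, h1, rfl⟩
    exact ⟨t, ⟨h0, h1⟩, by simp [Prod.ext_iff]; constructor <;> ring⟩

lemma segShape {P : ℝ×ℝ} {x1 y1 x2 y2 : ℝ} (h : P ∈ seg (x1,y1) (x2,y2)) :
    ∃ t, 0 ≤ t ∧ t ≤ 1 ∧ P.1 = x1 + t*(x2-x1) ∧ P.2 = y1 + t*(y2-y1) := by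
  rw [memSeg] at h; obtain ⟨t,h0,h1,he⟩ := h; exact ⟨t,h0,h1, by rw [he], by rw [he]⟩

lemma segMem {x1 y1 x2 y2 t : ℝ} (h0 : 0 ≤ t) (h1 : t ≤ 1) {P : ℝ×ℝ}
    (hP : P = (x1 + t*(x2-x1), y1 + t*(y2-y1))) : P ∈ seg (x1,y1) (x2,y2) :=
  (memSeg P x1 y1 x2 y2).2 ⟨t, h0, h1, hP⟩

lemma g3shapes {P : ℝ×ℝ} (h : P ∈ G3fig) :
    (P.2 = P.1 ∧ 0 ≤ P.1 ∧ P.1 ≤ 1) ∨ (P.2 = P.1 + 1 ∧ 1 ≤ P.1 ∧ P.1 ≤ 2) ∨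
    (P.2 = 2 - P.1 ∧ 1 < P.1 ∧ P.1 ≤ 2) ∨ (P.1 = 5/2 ∧ P.2 = 3/2) := by
  rcases h with ((h|h)|h)|h
  · obtain ⟨t,h0,h1,hx,hy⟩ := segShape h
    norm_num at hx hy
    left; constructor; · rw [hx, hy]
    constructor <;> [rw [hx]; rw [hx]] <;> linarith
  · obtain ⟨t,h0,h1,hx,hy⟩ := segShape h
    norm_num at hx hy
    right; left; refine ⟨by rw [hx, hy]; ring, by rw [hx]; linarith, by rw [hx]; linarith⟩
  · obtain ⟨t,h0,h1,hx,hy⟩ := segShape h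
    norm_num at hx hy
    rcases eq_or_lt_of_le h0 with h0' | h0'
    · left; refine ⟨?_, by rw [hx]; linarith, by rw [hx]; linarith⟩
      rw [hx, hy, ← h0']; ring
    · right; right; left
      refine ⟨by rw [hx, hy]; ring, by rw [hx]; linarith, by rw [hx]; linarith⟩
  · right; right; right
    simp only [Set.mem_singleton_iff] at h
    rw [h]; exact ⟨rfl, rfl⟩

lemma g1shapes {P : ℝ×ℝ} (h : P ∈ G1fig) :
    (P.2 = P.1 ∧ 0 ≤ P.1 ∧ P.1 ≤ 2) ∨ (P.2 = 2 - P.1 ∧ 1 ≤ P.1 ∧ P.1 ≤ 2) ∨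
    (P.2 = 4 - P.1 ∧ 2 ≤ P.1 ∧ P.1 ≤ 3) := by
  rcases h with ((h|h)|h)|h <;> obtain ⟨t,h0,h1,hx,hy⟩ := segShape h <;> norm_num at hx hy
  · left; refine ⟨by rw [hx,hy], by rw [hx]; linarith, by rw [hx]; linarith⟩
  · left; refine ⟨by rw [hx,hy], by rw [hx]; linarith, by rw [hx]; linarith⟩
  · right; left; refine ⟨by rw [hx,hy]; ring, by rw [hx]; linarith, by rw [hx]; linarith⟩
  · right; right; refine ⟨by rw [hx,hy]; ring, by rw [hx]; linarith, by rw [hx]; linarith⟩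

lemma g2shapes {P : ℝ×ℝ} (h : P ∈ G2fig) :
    (P.2 = P.1 ∧ 0 ≤ P.1 ∧ P.1 ≤ 2) ∨ (P.2 = P.1 + 1 ∧ 2 ≤ P.1 ∧ P.1 ≤ 3) ∨
    (P.2 = P.1 - 1 ∧ 3 ≤ P.1 ∧ P.1 ≤ 4) ∨ (P.2 = 4 - P.1 ∧ 2 ≤ P.1 ∧ P.1 ≤ 4) := by
  rcases h with ((((h|h)|h)|h)|h)|h <;> obtain ⟨t,h0,h1,hx,hy⟩ := segShape h <;> norm_num at hx hy
  · left; refine ⟨by rw [hx,hy], by rw [hx]; linarith, by rw [hx]; linarith⟩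
  · left; refine ⟨by rw [hx,hy], by rw [hx]; linarith, by rw [hx]; linarith⟩
  · right; left; refine ⟨by rw [hx,hy]; ring, by rw [hx]; linarith, by rw [hx]; linarith⟩
  · right; right; left; refine ⟨by rw [hx,hy]; ring, by rw [hx]; linarith, by rw [hx]; linarith⟩
  · right; right; right; refine ⟨by rw [hx,hy]; ring, by rw [hx]; linarith, by rw [hx]; linarith⟩
  · right; right; right; refine ⟨by rw [hx,hy]; ring, by rw [hx]; linarith, by rw [hx]; linarith⟩

noncomputable def phi1 : ℝ×ℝ → ℝ×ℝ := fun P =>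
  if 2 ≤ P.2 then ((P.1+2)/2, (P.1+2)/2) else if 1 < P.2 then (3,1)
  else if P.1 ≤ 1 then (P.1/2, P.1/2) else ((P.1+2)/2, (2-P.1)/2)

noncomputable def phi2 : ℝ×ℝ → ℝ×ℝ := fun P =>
  if 2 ≤ P.2 then (2+P.1/2, 3+P.1/2) else if 1 < P.2 then (7/2, 5/2)
  else if P.1 ≤ 1 then (1+P.1/2, 1+P.1/2) else (2+P.1/2, 2-P.1/2)

lemma phi1_spec {P : ℝ×ℝ} (h : P ∈ G3fig) :
    (P.2 = P.1 ∧ 0 ≤ P.1 ∧ P.1 ≤ 1 ∧ phi1 P = (P.1/2, P.1/2)) ∨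
    (P.2 = P.1 + 1 ∧ 1 ≤ P.1 ∧ P.1 ≤ 2 ∧ phi1 P = ((P.1+2)/2, (P.1+2)/2)) ∨
    (P.2 = 2 - P.1 ∧ 1 < P.1 ∧ P.1 ≤ 2 ∧ phi1 P = ((P.1+2)/2, (2-P.1)/2)) ∨
    (P.1 = 5/2 ∧ P.2 = 3/2 ∧ phi1 P = (3,1)) := by
  rcases g3shapes h with ⟨e,a,b⟩|⟨e,a,b⟩|⟨e,a,b⟩|⟨a,e⟩
  · left; refine ⟨e,a,b,?_⟩; unfold phi1
    rw [if_neg (by linarith), if_neg (by linarith), if_pos b]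
  · right; left; refine ⟨e,a,b,?_⟩; unfold phi1
    rw [if_pos (by linarith)]
  · right; right; left; refine ⟨e,a,b,?_⟩; unfold phi1
    rw [if_neg (by linarith), if_neg (by linarith), if_neg (by linarith)]
  · right; right; right; refine ⟨a,e,?_⟩; unfold phi1
    rw [if_neg (by linarith), if_pos (by linarith)]

lemma phi2_spec {P : ℝ×ℝ} (h : P ∈ G3fig) :
    (P.2 = P.1 ∧ 0 ≤ P.1 ∧ P.1 ≤ 1 ∧ phi2 P = (1+P.1/2, 1+P.1/2)) ∨
    (P.2 = P.1 + 1 ∧ 1 ≤ P.1 ∧ P.1 ≤ 2 ∧ phi2 P = (2+P.1/2, 3+P.1/2)) ∨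
    (P.2 = 2 - P.1 ∧ 1 < P.1 ∧ P.1 ≤ 2 ∧ phi2 P = (2+P.1/2, 2-P.1/2)) ∨
    (P.1 = 5/2 ∧ P.2 = 3/2 ∧ phi2 P = (7/2, 5/2)) := by
  rcases g3shapes h with ⟨e,a,b⟩|⟨e,a,b⟩|⟨e,a,b⟩|⟨a,e⟩
  · left; refine ⟨e,a,b,?_⟩; unfold phi2
    rw [if_neg (by linarith), if_neg (by linarith), if_pos b]
  · right; left; refine ⟨e,a,b,?_⟩; unfold phi2
    rw [if_pos (by linarith)]
  · right; right; left; refine ⟨e,a,b,?_⟩; unfold phi2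
    rw [if_neg (by linarith), if_neg (by linarith), if_neg (by linarith)]
  · right; right; right; refine ⟨a,e,?_⟩; unfold phi2
    rw [if_neg (by linarith), if_pos (by linarith)]

lemma phi1_mem {P : ℝ×ℝ} (h : P ∈ G3fig) : phi1 P ∈ G1fig := by
  rcases phi1_spec h with ⟨e,a,b,o⟩|⟨e,a,b,o⟩|⟨e,a,b,o⟩|⟨a,e,o⟩ <;> rw [o]
  · exact Or.inl (Or.inl (Or.inl (segMem (x1:=0) (y1:=0) (x2:=1) (y2:=1) (t := P.1/2)
      (by linarith) (by linarith) (by norm_num))))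
  · exact Or.inl (Or.inl (Or.inr (segMem (x1:=1) (y1:=1) (x2:=2) (y2:=2) (t := P.1/2)
      (by linarith) (by linarith) (by rw [Prod.ext_iff]; constructor <;> (simp; ring)))))
  · exact Or.inl (Or.inr (segMem (x1:=1) (y1:=1) (x2:=2) (y2:=0) (t := P.1/2)
      (by linarith) (by linarith) (by rw [Prod.ext_iff]; constructor <;> (simp; ring))))
  · exact Or.inr (segMem (x1:=2) (y1:=2) (x2:=3) (y2:=1) (t := 1)
      (by norm_num) (by norm_num) (by norm_num))

lemma phi2_mem {P : ℝ×ℝ} (h : P ∈ G3fig) : phi2 P ∈ G2fig := by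
  rcases phi2_spec h with ⟨e,a,b,o⟩|⟨e,a,b,o⟩|⟨e,a,b,o⟩|⟨a,e,o⟩ <;> rw [o]
  · have : ((1+P.1/2 : ℝ), (1+P.1/2 : ℝ)) ∈ seg (1,1) (2,2) :=
      segMem (t := P.1/2) (by linarith) (by linarith)
        (by rw [Prod.ext_iff]; constructor <;> (norm_num))
    exact Or.inl (Or.inl (Or.inl (Or.inl (Or.inr this))))
  · have : ((2+P.1/2 : ℝ), (3+P.1/2 : ℝ)) ∈ seg (2,3) (3,4) :=
      segMem (t := P.1/2) (by linarith) (by linarith)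
        (by rw [Prod.ext_iff]; constructor <;> (norm_num))
    exact Or.inl (Or.inl (Or.inl (Or.inr this)))
  · have : ((2+P.1/2 : ℝ), (2-P.1/2 : ℝ)) ∈ seg (2,2) (3,1) :=
      segMem (t := P.1/2) (by linarith) (by linarith)
        (by rw [Prod.ext_iff]; constructor <;> (norm_num; try ring))
    exact Or.inl (Or.inr this)
  · have : ((7/2 : ℝ), (5/2 : ℝ)) ∈ seg (3,2) (4,3) :=
      segMem (t := 1/2) (by norm_num) (by norm_num) (by norm_num)
    exact Or.inl (Or.inl (Or.inr this))

lemma phi1_x {P Q : ℝ×ℝ} (hP : P ∈ G3fig) (hQ : Q ∈ G3fig) (h : P.1 < Q.1) :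
    (phi1 P).1 < (phi1 Q).1 := by
  rcases phi1_spec hP with ⟨e1,a1,b1,o1⟩|⟨e1,a1,b1,o1⟩|⟨e1,a1,b1,o1⟩|⟨a1,e1,o1⟩ <;>
    rcases phi1_spec hQ with ⟨e2,a2,b2,o2⟩|⟨e2,a2,b2,o2⟩|⟨e2,a2,b2,o2⟩|⟨a2,e2,o2⟩ <;>
    rw [o1, o2] <;> simp only [] <;> linarith

lemma phi2_x {P Q : ℝ×ℝ} (hP : P ∈ G3fig) (hQ : Q ∈ G3fig) (h : P.1 < Q.1) :
    (phi2 P).1 < (phi2 Q).1 := by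
  rcases phi2_spec hP with ⟨e1,a1,b1,o1⟩|⟨e1,a1,b1,o1⟩|⟨e1,a1,b1,o1⟩|⟨a1,e1,o1⟩ <;>
    rcases phi2_spec hQ with ⟨e2,a2,b2,o2⟩|⟨e2,a2,b2,o2⟩|⟨e2,a2,b2,o2⟩|⟨a2,e2,o2⟩ <;>
    rw [o1, o2] <;> simp only [] <;> linarith

lemma phi1_ylt {P Q : ℝ×ℝ} (hP : P ∈ G3fig) (hQ : Q ∈ G3fig) (h : P.2 < Q.2) :
    (phi1 P).2 < (phi1 Q).2 := by
  rcases phi1_spec hP with ⟨e1,a1,b1,o1⟩|⟨e1,a1,b1,o1⟩|⟨e1,a1,b1,o1⟩|⟨a1,e1,o1⟩ <;>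
    rcases phi1_spec hQ with ⟨e2,a2,b2,o2⟩|⟨e2,a2,b2,o2⟩|⟨e2,a2,b2,o2⟩|⟨a2,e2,o2⟩ <;>
    rw [o1, o2] <;> simp only [] <;> linarith

lemma phi1_yeq {P Q : ℝ×ℝ} (hP : P ∈ G3fig) (hQ : Q ∈ G3fig) (h : P.2 = Q.2) :
    (phi1 P).2 = (phi1 Q).2 := by
  rcases phi1_spec hP with ⟨e1,a1,b1,o1⟩|⟨e1,a1,b1,o1⟩|⟨e1,a1,b1,o1⟩|⟨a1,e1,o1⟩ <;>
    rcases phi1_spec hQ with ⟨e2,a2,b2,o2⟩|⟨e2,a2,b2,o2⟩|⟨e2,a2,b2,o2⟩|⟨a2,e2,o2⟩ <;>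
    rw [o1, o2] <;> simp only [] <;> linarith

lemma phi2_ylt {P Q : ℝ×ℝ} (hP : P ∈ G3fig) (hQ : Q ∈ G3fig) (h : P.2 < Q.2) :
    (phi2 P).2 < (phi2 Q).2 := by
  rcases phi2_spec hP with ⟨e1,a1,b1,o1⟩|⟨e1,a1,b1,o1⟩|⟨e1,a1,b1,o1⟩|⟨a1,e1,o1⟩ <;>
    rcases phi2_spec hQ with ⟨e2,a2,b2,o2⟩|⟨e2,a2,b2,o2⟩|⟨e2,a2,b2,o2⟩|⟨a2,e2,o2⟩ <;>
    rw [o1, o2] <;> simp only [] <;> linarith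

lemma phi2_yeq {P Q : ℝ×ℝ} (hP : P ∈ G3fig) (hQ : Q ∈ G3fig) (h : P.2 = Q.2) :
    (phi2 P).2 = (phi2 Q).2 := by
  rcases phi2_spec hP with ⟨e1,a1,b1,o1⟩|⟨e1,a1,b1,o1⟩|⟨e1,a1,b1,o1⟩|⟨a1,e1,o1⟩ <;>
    rcases phi2_spec hQ with ⟨e2,a2,b2,o2⟩|⟨e2,a2,b2,o2⟩|⟨e2,a2,b2,o2⟩|⟨a2,e2,o2⟩ <;>
    rw [o1, o2] <;> simp only [] <;> linarith

lemma forward (l : List ℕ) (h : DrawnOn l G3fig) : DrawnOn l G1fig ∧ DrawnOn l G2fig := by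
  obtain ⟨r, hmem, hx, hy⟩ := h
  constructor
  · refine ⟨fun i => phi1 (r i), fun i => phi1_mem (hmem i), fun i j hij => phi1_x (hmem i) (hmem j) (hx hij), fun i j => ?_⟩
    rw [hy i j]
    constructor
    · exact fun hlt => phi1_ylt (hmem i) (hmem j) hlt
    · intro hlt
      rcases lt_trichotomy (r i).2 (r j).2 with h'|h'|h'
      · exact h'
      · exact absurd (phi1_yeq (hmem i) (hmem j) h') (ne_of_lt hlt)
      · exact absurd (phi1_ylt (hmem j) (hmem i) h') (asymm hlt)
  · refine ⟨fun i => phi2 (r i), fun i => phi2_mem (hmem i), fun i j hij => phi2_x (hmem i) (hmem j) (hx hij), fun i j => ?_⟩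
    rw [hy i j]
    constructor
    · exact fun hlt => phi2_ylt (hmem i) (hmem j) hlt
    · intro hlt
      rcases lt_trichotomy (r i).2 (r j).2 with h'|h'|h'
      · exact h'
      · exact absurd (phi2_yeq (hmem i) (hmem j) h') (ne_of_lt hlt)
      · exact absurd (phi2_ylt (hmem j) (hmem i) h') (asymm hlt)

noncomputable def tval (v : ℕ) : ℝ := ((v:ℝ)+1)/((v:ℝ)+2)

lemma tval_pos (v : ℕ) : 0 < tval v := by
  unfold tval; positivity

lemma tval_lt_one (v : ℕ) : tval v < 1 := by
  unfold tval
  rw [div_lt_one (by positivity)]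
  linarith

lemma tval_mono {v w : ℕ} (h : v < w) : tval v < tval w := by
  unfold tval
  rw [div_lt_div_iff₀ (by positivity) (by positivity)]
  have : (v:ℝ) < (w:ℝ) := by exact_mod_cast h
  nlinarith

noncomputable def SLs (l : List ℕ) (role : Fin l.length → ℕ) (i : Fin l.length) : Finset ℝ :=
  insert (0:ℝ) ((Finset.univ.filter (fun c => role c = 2 ∧ l.get c < l.get i)).image
    (fun c => 1 - tval c.val))

noncomputable def SUs (l : List ℕ) (role : Fin l.length → ℕ) (i : Fin l.length) : Finset ℝ :=
  insert (1:ℝ) ((Finset.univ.filter (fun c => role c = 2 ∧ l.get i < l.get c)).image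
    (fun c => 1 - tval c.val))

noncomputable def Lv (l : List ℕ) (role : Fin l.length → ℕ) (i : Fin l.length) : ℝ :=
  (SLs l role i).max' (Finset.insert_nonempty _ _)

noncomputable def Uv (l : List ℕ) (role : Fin l.length → ℕ) (i : Fin l.length) : ℝ :=
  (SUs l role i).min' (Finset.insert_nonempty _ _)

noncomputable def yav (l : List ℕ) (role : Fin l.length → ℕ) (i : Fin l.length) : ℝ :=
  Lv l role i + (Uv l role i - Lv l role i) * tval (l.get i)

noncomputable def draw (l : List ℕ) (role : Fin l.length → ℕ) (i : Fin l.length) : ℝ × ℝ :=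
  if role i = 0 then (yav l role i, yav l role i)
  else if role i = 1 then (1 + tval i.val, 2 + tval i.val)
  else if role i = 2 then (1 + tval i.val, 1 - tval i.val)
  else ((5:ℝ)/2, 3/2)

lemma draw0 {l : List ℕ} {role : Fin l.length → ℕ} {i : Fin l.length} (h : role i = 0) :
    draw l role i = (yav l role i, yav l role i) := by unfold draw; rw [if_pos h]

lemma draw1 {l : List ℕ} {role : Fin l.length → ℕ} {i : Fin l.length} (h : role i = 1) :
    draw l role i = (1 + tval i.val, 2 + tval i.val) := by
  unfold draw; rw [if_neg (by omega), if_pos h]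

lemma draw2 {l : List ℕ} {role : Fin l.length → ℕ} {i : Fin l.length} (h : role i = 2) :
    draw l role i = (1 + tval i.val, 1 - tval i.val) := by
  unfold draw; rw [if_neg (by omega), if_neg (by omega), if_pos h]

lemma draw3 {l : List ℕ} {role : Fin l.length → ℕ} {i : Fin l.length} (h : role i = 3) :
    draw l role i = ((5:ℝ)/2, 3/2) := by
  unfold draw; rw [if_neg (by omega), if_neg (by omega), if_neg (by omega)]

lemma buildG3 (l : List ℕ) (hinj : Function.Injective l.get)
    (role : Fin l.length → ℕ)
    (o0 : ∀ i, role i = 0 ∨ role i = 1 ∨ role i = 2 ∨ role i = 3)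
    (o1 : ∀ i j, role i = 0 → role j ≠ 0 → i < j)
    (o2 : ∀ i j, role i ≠ 3 → role j = 3 → i < j)
    (o3 : ∀ i j, i < j → role i = 0 → role j = 0 → l.get i < l.get j)
    (o4 : ∀ i j, i < j → role i = 1 → role j = 1 → l.get i < l.get j)
    (o5 : ∀ i j, i < j → role i = 2 → role j = 2 → l.get j < l.get i)
    (o6 : ∀ i j, role i = 3 → role j = 3 → i = j)
    (o7 : ∀ i j, (role i = 0 ∨ role i = 2) → (role j = 1 ∨ role j = 3) → l.get i < l.get j)
    (o8 : ∀ i j, role i = 3 → role j = 1 → l.get i < l.get j) :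
    DrawnOn l G3fig := by
  classical
  -- order of s-values on C matches reversed value order
  have hC_s : ∀ c c' : Fin l.length, role c = 2 → role c' = 2 → l.get c < l.get c' →
      tval c'.val < tval c.val := by
    intro c c' hc hc' hlt
    rcases lt_trichotomy c c' with h|h|h
    · exact absurd (o5 c c' h hc hc') (by omega)
    · subst h; omega
    · exact tval_mono (by exact_mod_cast h)
  have hLU : ∀ i, Lv l role i < Uv l role i := by
    intro i
    apply (Finset.max'_lt_iff _ _).2
    intro a ha
    apply (Finset.lt_min'_iff _ _).2
    intro b hb
    rcases Finset.mem_insert.1 ha with rfl | ha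
    · rcases Finset.mem_insert.1 hb with rfl | hb
      · norm_num
      · obtain ⟨c, hc, rfl⟩ := Finset.mem_image.1 hb
        have := tval_lt_one c.val; linarith
    · obtain ⟨c, hc, rfl⟩ := Finset.mem_image.1 ha
      have hc' := Finset.mem_filter.1 hc
      rcases Finset.mem_insert.1 hb with rfl | hb
      · have := tval_pos c.val; linarith
      · obtain ⟨c', hc2, rfl⟩ := Finset.mem_image.1 hb
        have hc2' := Finset.mem_filter.1 hc2
        have := hC_s c c' hc'.2.1 hc2'.2.1 (lt_trans hc'.2.2 hc2'.2.2)
        linarith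
  have hL0 : ∀ i, 0 ≤ Lv l role i := fun i =>
    Finset.le_max' _ _ (Finset.mem_insert_self _ _)
  have hU1 : ∀ i, Uv l role i ≤ 1 := fun i =>
    Finset.min'_le _ _ (Finset.mem_insert_self _ _)
  have hya : ∀ i, Lv l role i < yav l role i ∧ yav l role i < Uv l role i := by
    intro i
    unfold yav
    have h1 := hLU i
    have h2 := tval_pos (l.get i)
    have h3 := tval_lt_one (l.get i)
    constructor <;> nlinarith
  have hya01 : ∀ i, 0 < yav l role i ∧ yav l role i < 1 := by
    intro i
    have := hya i; have := hL0 i; have := hU1 i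
    constructor <;> linarith
  have hyaCl : ∀ i (c : Fin l.length), role c = 2 → l.get c < l.get i →
      1 - tval c.val ≤ Lv l role i := by
    intro i c hc hlt
    have hmem : (1 - tval c.val) ∈ SLs l role i := by
      unfold SLs
      exact Finset.mem_insert_of_mem (Finset.mem_image_of_mem _
        (Finset.mem_filter.2 ⟨Finset.mem_univ _, hc, hlt⟩))
    exact Finset.le_max' _ _ hmem
  have hyaCu : ∀ i (c : Fin l.length), role c = 2 → l.get i < l.get c →
      Uv l role i ≤ 1 - tval c.val := by
    intro i c hc hlt
    have hmem : (1 - tval c.val) ∈ SUs l role i := by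
      unfold SUs
      exact Finset.mem_insert_of_mem (Finset.mem_image_of_mem _
        (Finset.mem_filter.2 ⟨Finset.mem_univ _, hc, hlt⟩))
    exact Finset.min'_le _ _ hmem
  have hyaA : ∀ i j, role i = 0 → role j = 0 → l.get i < l.get j →
      yav l role i < yav l role j := by
    intro i j hi hj hlt
    by_cases hex : ∃ c, role c = 2 ∧ l.get i < l.get c ∧ l.get c < l.get j
    · obtain ⟨c, hc, h1, h2⟩ := hex
      have u1 := hyaCu i c hc h1
      have u2 := hyaCl j c hc h2
      have v1 := (hya i).2
      have v2 := (hya j).1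
      linarith
    · have hiff : ∀ c : Fin l.length, (role c = 2 ∧ l.get c < l.get i) ↔
          (role c = 2 ∧ l.get c < l.get j) := by
        intro c
        constructor
        · rintro ⟨h2, h3⟩; exact ⟨h2, lt_trans h3 hlt⟩
        · rintro ⟨h2, h3⟩
          refine ⟨h2, ?_⟩
          rcases lt_trichotomy (l.get c) (l.get i) with h|h|h
          · exact h
          · exact absurd (hinj h) (by intro he; rw [he] at h2; omega)
          · exact (hex ⟨c, h2, h, h3⟩).elim
      have hiff' : ∀ c : Fin l.length, (role c = 2 ∧ l.get i < l.get c) ↔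
          (role c = 2 ∧ l.get j < l.get c) := by
        intro c
        constructor
        · rintro ⟨h2, h3⟩
          refine ⟨h2, ?_⟩
          rcases lt_trichotomy (l.get j) (l.get c) with h|h|h
          · exact h
          · exact absurd (hinj h.symm) (by intro he; rw [he] at h2; omega)
          · exact (hex ⟨c, h2, h3, h⟩).elim
        · rintro ⟨h2, h3⟩; exact ⟨h2, lt_trans hlt h3⟩
      have hSL : SLs l role i = SLs l role j := by
        unfold SLs
        congr 1
        congr 1
        ext c
        simp only [Finset.mem_filter, Finset.mem_univ, true_and]
        exact hiff c
      have hSU : SUs l role i = SUs l role j := by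
        unfold SUs
        congr 1
        congr 1
        ext c
        simp only [Finset.mem_filter, Finset.mem_univ, true_and]
        exact hiff' c
      have hLij : Lv l role i = Lv l role j := by unfold Lv; congr 1
      have hUij : Uv l role i = Uv l role j := by unfold Uv; congr 1
      unfold yav
      rw [hLij, hUij]
      have h1 := hLU j
      have h2 := tval_mono hlt
      nlinarith
  refine ⟨draw l role, ?_, ?_, ?_⟩
  · intro i
    rcases o0 i with h|h|h|h
    · rw [draw0 h]
      refine Or.inl (Or.inl (Or.inl (segMem (t := yav l role i)
        (le_of_lt (hya01 i).1) (le_of_lt (hya01 i).2) ?_)))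
      rw [Prod.ext_iff]; constructor <;> norm_num
    · rw [draw1 h]
      refine Or.inl (Or.inl (Or.inr (segMem (t := tval i.val)
        (le_of_lt (tval_pos _)) (le_of_lt (tval_lt_one _)) ?_)))
      rw [Prod.ext_iff]; constructor <;> norm_num
    · rw [draw2 h]
      refine Or.inl (Or.inr (segMem (t := tval i.val)
        (le_of_lt (tval_pos _)) (le_of_lt (tval_lt_one _)) ?_))
      rw [Prod.ext_iff]; constructor <;> (norm_num; try ring)
    · rw [draw3 h]
      exact Or.inr rfl
  · intro i j hij
    simp only []
    rcases o0 i with h|h|h|h <;> rcases o0 j with h'|h'|h'|h'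
    · rw [draw0 h, draw0 h']; simp only [Prod.fst]
      exact hyaA i j h h' (o3 i j hij h h')
    · rw [draw0 h, draw1 h']; simp only [Prod.fst]
      have := (hya01 i).2; have := tval_pos j.val; linarith
    · rw [draw0 h, draw2 h']; simp only [Prod.fst]
      have := (hya01 i).2; have := tval_pos j.val; linarith
    · rw [draw0 h, draw3 h']; simp only [Prod.fst]
      have := (hya01 i).2; linarith
    · exact absurd (o1 j i h' (by omega)) (by exact fun hc => absurd (lt_trans hc hij) (lt_irrefl _))
    · rw [draw1 h, draw1 h']; simp only [Prod.fst]
      have := tval_mono (show i.val < j.val from hij); linarith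
    · rw [draw1 h, draw2 h']; simp only [Prod.fst]
      have := tval_mono (show i.val < j.val from hij); linarith
    · rw [draw1 h, draw3 h']; simp only [Prod.fst]
      have := tval_lt_one i.val; linarith
    · exact absurd (o1 j i h' (by omega)) (by exact fun hc => absurd (lt_trans hc hij) (lt_irrefl _))
    · rw [draw2 h, draw1 h']; simp only [Prod.fst]
      have := tval_mono (show i.val < j.val from hij); linarith
    · rw [draw2 h, draw2 h']; simp only [Prod.fst]
      have := tval_mono (show i.val < j.val from hij); linarith
    · rw [draw2 h, draw3 h']; simp only [Prod.fst]
      have := tval_lt_one i.val; linarith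
    · exact absurd (o2 j i (by omega) h) (by exact fun hc => absurd (lt_trans hc hij) (lt_irrefl _))
    · exact absurd (o2 j i (by omega) h) (by exact fun hc => absurd (lt_trans hc hij) (lt_irrefl _))
    · exact absurd (o2 j i (by omega) h) (by exact fun hc => absurd (lt_trans hc hij) (lt_irrefl _))
    · exact absurd (o6 i j h h') (by exact fun hc => absurd hij (by rw [hc]; exact lt_irrefl _))
  · have hlt : ∀ i j, l.get i < l.get j → (draw l role i).2 < (draw l role j).2 := by
      intro i j hlt
      rcases o0 i with h|h|h|h <;> rcases o0 j with h'|h'|h'|h'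
      · rw [draw0 h, draw0 h']; simp only [Prod.snd]
        exact hyaA i j h h' hlt
      · rw [draw0 h, draw1 h']; simp only [Prod.snd]
        have := (hya01 i).2; have := tval_pos j.val; linarith
      · rw [draw0 h, draw2 h']; simp only [Prod.snd]
        have h1 := hyaCu i j h' hlt
        have := (hya i).2; linarith
      · rw [draw0 h, draw3 h']; simp only [Prod.snd]
        have := (hya01 i).2; linarith
      · exact absurd (o7 j i (Or.inl h') (Or.inl h)) (by omega)
      · rw [draw1 h, draw1 h']; simp only [Prod.snd]
        rcases lt_trichotomy i j with hc|hc|hc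
        · have := tval_mono (show i.val < j.val from hc); linarith
        · subst hc; omega
        · exact absurd (o4 j i hc h' h) (by omega)
      · exact absurd (o7 j i (Or.inr h') (Or.inl h)) (by omega)
      · exact absurd (o8 j i h' h) (by omega)
      · rw [draw2 h, draw0 h']; simp only [Prod.snd]
        have h1 := hyaCl j i h hlt
        have := (hya j).1; linarith
      · rw [draw2 h, draw1 h']; simp only [Prod.snd]
        have := tval_pos i.val; have := tval_pos j.val; linarith
      · rw [draw2 h, draw2 h']; simp only [Prod.snd]
        rcases lt_trichotomy i j with hc|hc|hc
        · exact absurd (o5 i j hc h h') (by omega)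
        · subst hc; omega
        · have := tval_mono (show j.val < i.val from hc); linarith
      · rw [draw2 h, draw3 h']; simp only [Prod.snd]
        have := tval_pos i.val; linarith
      · exact absurd (o7 j i (Or.inl h') (Or.inr h)) (by omega)
      · rw [draw3 h, draw1 h']; simp only [Prod.snd]
        have := tval_pos j.val; linarith
      · exact absurd (o7 j i (Or.inr h') (Or.inr h)) (by omega)
      · have := o6 i j h h'; subst this; omega
    intro i j
    constructor
    · exact hlt i j
    · intro hy
      rcases lt_trichotomy (l.get i) (l.get j) with h|h|h
      · exact h
      · exfalso
        have : i = j := hinj h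
        subst this
        exact lt_irrefl _ hy
      · exact absurd (hlt j i h) (asymm hy)

set_option maxHeartbeats 1000000 in
lemma core (l : List ℕ) (hinj : Function.Injective l.get)
    (p q : Fin l.length → ℕ)
    (p0 : ∀ i, p i = 0 ∨ p i = 1 ∨ p i = 2 ∨ p i = 3)
    (p1 : ∀ i j, p i = 0 → p j ≠ 0 → i < j)
    (p2 : ∀ i j, p i ≠ 3 → p j = 3 → i < j)
    (pA : ∀ i j, i < j → p i = 0 → p j = 0 → l.get i < l.get j)
    (pB : ∀ i j, i < j → p i = 1 → p j = 1 → l.get i < l.get j)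
    (pC : ∀ i j, i < j → p i = 2 → p j = 2 → l.get j < l.get i)
    (pD : ∀ i j, i < j → p i = 3 → p j = 3 → l.get j < l.get i)
    (pV : ∀ i j, (p i = 0 ∨ p i = 2) → (p j = 1 ∨ p j = 3) → l.get i < l.get j)
    (q0 : ∀ i, q i = 0 ∨ q i = 1 ∨ q i = 2 ∨ q i = 3 ∨ q i = 4)
    (q1 : ∀ i j, q i = 0 → q j ≠ 0 → i < j)
    (q2 : ∀ i j, (q i = 1 ∨ q i = 2) → (q j = 3 ∨ q j = 4) → i < j)
    (qE : ∀ i j, i < j → q i = 0 → q j = 0 → l.get i < l.get j)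
    (qBH : ∀ i j, i < j → q i = 1 → q j = 1 → l.get i < l.get j)
    (qBT : ∀ i j, i < j → q i = 3 → q j = 3 → l.get i < l.get j)
    (qCH : ∀ i j, i < j → q i = 2 → q j = 2 → l.get j < l.get i)
    (qCT : ∀ i j, i < j → q i = 4 → q j = 4 → l.get j < l.get i)
    (qV1 : ∀ i j, q i = 4 → q j = 2 → l.get i < l.get j)
    (qV2 : ∀ i j, q i = 2 → q j = 3 → l.get i < l.get j)
    (qV3 : ∀ i j, q i = 4 → q j = 3 → l.get i < l.get j)
    (qV4 : ∀ i j, q i = 3 → q j = 1 → l.get i < l.get j)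
    (qV5 : ∀ i j, q i = 0 → q j = 3 → l.get i < l.get j)
    (qV6 : ∀ i j, q i = 0 → q j = 1 → l.get i < l.get j)
    (qV7 : ∀ i j, q i = 2 → q j = 1 → l.get i < l.get j)
    (qV8 : ∀ i j, q i = 4 → q j = 1 → l.get i < l.get j) :
    DrawnOn l G3fig := by
  classical
  have tri : ∀ i j : Fin l.length, i ≠ j → l.get i < l.get j ∨ l.get j < l.get i := by
    intro i j h
    have : l.get i ≠ l.get j := fun he => h (hinj he)
    omega
  have pDsuf : ∀ d i : Fin l.length, p d = 3 → d ≤ i → p i = 3 := by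
    intro d i hd hle
    by_contra h
    exact absurd (p2 i d h hd) (not_lt.2 hle)
  by_cases hD : ∃ d, p d = 3
  · obtain ⟨d, hd⟩ := hD
    have hn : 0 < l.length := d.pos
    set last : Fin l.length := ⟨l.length - 1, by omega⟩ with hlastdef
    have hle_last : ∀ i : Fin l.length, i ≤ last := by
      intro i
      rw [Fin.le_def]
      have := i.isLt
      simp only [hlastdef]
      omega
    have hlt_last : ∀ i : Fin l.length, i ≠ last → i < last := fun i h =>
      lt_of_le_of_ne (hle_last i) h
    have hlast3 : p last = 3 := pDsuf d last hd (hle_last d)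
    by_cases hTnice : (∀ x y, x < y → y < last → (p x = 1 ∨ p x = 3) →
        (p y = 1 ∨ p y = 3) → l.get x < l.get y) ∧
        ((∀ i, i < last → (p i = 1 ∨ p i = 3) → l.get last < l.get i) ∨
         (∀ i, i < last → (p i = 1 ∨ p i = 3) → l.get i < l.get last))
    · obtain ⟨hinc, habove | hbelow⟩ := hTnice
      · -- D' = {last}, B' = top minus last
        refine buildG3 l hinj
          (fun i => if i = last then 3 else if p i = 1 ∨ p i = 3 then 1 else p i)
          ?_ ?_ ?_ ?_ ?_ ?_ ?_ ?_ ?_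
        · intro i
          by_cases h1 : i = last
          · simp [h1]
          · by_cases h2 : p i = 1 ∨ p i = 3
            · simp [h1, h2]
            · rcases p0 i with h|h|h|h <;> simp [h1, h2, h] <;> omega
        · intro i j hi hj
          try beta_reduce at hi hj
          by_cases h1 : i = last
          · simp [h1] at hi
          · by_cases h2 : p i = 1 ∨ p i = 3
            · simp [h1, h2] at hi
            · simp only [h1, if_neg, if_false] at hi
              rw [if_neg h2] at hi
              by_cases h3 : j = last
              · subst h3; exact hlt_last i h1
              · by_cases h4 : p j = 1 ∨ p j = 3
                · exact p1 i j hi (by omega)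
                · simp only [if_neg h3, if_neg h4] at hj
                  exact p1 i j hi hj
        · intro i j hi hj
          try beta_reduce at hi hj
          by_cases h3 : j = last
          · subst h3
            by_cases h1 : i = last
            · exact absurd hi (by simp [h1])
            · exact hlt_last i h1
          · exfalso
            by_cases h4 : p j = 1 ∨ p j = 3
            · simp [h3, h4] at hj
            · simp only [if_neg h3, if_neg h4] at hj
              rcases p0 j with h|h|h|h <;> omega
        · intro i j hij hi hj
          try beta_reduce at hi hj
          have h1 : i ≠ last := by intro he; rw [he] at hi; simp at hi
          have h3 : j ≠ last := by intro he; rw [he] at hj; simp at hj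
          rw [if_neg h1] at hi; rw [if_neg h3] at hj
          by_cases h2 : p i = 1 ∨ p i = 3
          · simp [h2] at hi
          · by_cases h4 : p j = 1 ∨ p j = 3
            · simp [h4] at hj
            · rw [if_neg h2] at hi; rw [if_neg h4] at hj
              exact pA i j hij hi hj
        · intro i j hij hi hj
          try beta_reduce at hi hj
          have h1 : i ≠ last := by intro he; rw [he] at hi; simp at hi
          have h3 : j ≠ last := by intro he; rw [he] at hj; simp at hj
          rw [if_neg h1] at hi; rw [if_neg h3] at hj
          by_cases h2 : p i = 1 ∨ p i = 3
          · by_cases h4 : p j = 1 ∨ p j = 3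
            · exact hinc i j hij (hlt_last j h3) h2 h4
            · rw [if_neg h4] at hj; omega
          · rw [if_neg h2] at hi; omega
        · intro i j hij hi hj
          try beta_reduce at hi hj
          have h1 : i ≠ last := by intro he; rw [he] at hi; simp at hi
          have h3 : j ≠ last := by intro he; rw [he] at hj; simp at hj
          rw [if_neg h1] at hi; rw [if_neg h3] at hj
          by_cases h2 : p i = 1 ∨ p i = 3
          · simp [h2] at hi
          · by_cases h4 : p j = 1 ∨ p j = 3
            · simp [h4] at hj
            · rw [if_neg h2] at hi; rw [if_neg h4] at hj
              exact pC i j hij hi hj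
        · intro i j hi hj
          try beta_reduce at hi hj
          have h1 : i = last := by
            by_contra h1
            rw [if_neg h1] at hi
            by_cases h2 : p i = 1 ∨ p i = 3
            · simp [h2] at hi
            · rw [if_neg h2] at hi; omega
          have h3 : j = last := by
            by_contra h3
            rw [if_neg h3] at hj
            by_cases h4 : p j = 1 ∨ p j = 3
            · simp [h4] at hj
            · rw [if_neg h4] at hj; omega
          rw [h1, h3]
        · intro i j hi hj
          try beta_reduce at hi hj
          have h1 : i ≠ last := by
            intro he; rw [he, if_pos rfl] at hi; omega
          rw [if_neg h1] at hi
          have hpi : p i = 0 ∨ p i = 2 := by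
            by_cases h2 : p i = 1 ∨ p i = 3
            · rw [if_pos h2] at hi; omega
            · rw [if_neg h2] at hi; omega
          rcases hj with hj | hj
          · -- role j = 1 : p j top
            have h3 : j ≠ last := by
              intro he; rw [he, if_pos rfl] at hj; omega
            rw [if_neg h3] at hj
            have hpj : p j = 1 ∨ p j = 3 := by
              by_cases h4 : p j = 1 ∨ p j = 3
              · exact h4
              · rw [if_neg h4] at hj; rcases p0 j with h|h|h|h <;> omega
            exact pV i j hpi hpj
          · -- role j = 3 : j = last
            have h3 : j = last := by
              by_contra h3
              rw [if_neg h3] at hj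
              by_cases h4 : p j = 1 ∨ p j = 3
              · rw [if_pos h4] at hj; omega
              · rw [if_neg h4] at hj; omega
            rw [h3]
            exact pV i last hpi (Or.inr hlast3)
        · intro i j hi hj
          try beta_reduce at hi hj
          have h1 : i = last := by
            by_contra h1
            rw [if_neg h1] at hi
            by_cases h2 : p i = 1 ∨ p i = 3
            · rw [if_pos h2] at hi; omega
            · rw [if_neg h2] at hi; omega
          have h3 : j ≠ last := by
            intro he; rw [he, if_pos rfl] at hj; omega
          rw [if_neg h3] at hj
          have hpj : p j = 1 ∨ p j = 3 := by
            by_cases h4 : p j = 1 ∨ p j = 3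
            · exact h4
            · rw [if_neg h4] at hj; rcases p0 j with h|h|h|h <;> omega
          rw [h1]
          exact habove j (hlt_last j h3) hpj
      · -- B' = all of top (values below z, plus last on top)
        refine buildG3 l hinj (fun i => if p i = 1 ∨ p i = 3 then 1 else p i)
          ?_ ?_ ?_ ?_ ?_ ?_ ?_ ?_ ?_
        · intro i
          by_cases h2 : p i = 1 ∨ p i = 3
          · simp [h2]
          · rcases p0 i with h|h|h|h <;> simp [h2, h] <;> omega
        · intro i j hi hj
          try beta_reduce at hi hj
          by_cases h2 : p i = 1 ∨ p i = 3
          · simp [h2] at hi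
          · rw [if_neg h2] at hi
            by_cases h4 : p j = 1 ∨ p j = 3
            · exact p1 i j hi (by omega)
            · rw [if_neg h4] at hj
              exact p1 i j hi hj
        · intro i j hi hj
          try beta_reduce at hi hj
          exfalso
          by_cases h4 : p j = 1 ∨ p j = 3
          · rw [if_pos h4] at hj; omega
          · rw [if_neg h4] at hj; rcases p0 j with h|h|h|h <;> omega
        · intro i j hij hi hj
          try beta_reduce at hi hj
          by_cases h2 : p i = 1 ∨ p i = 3
          · simp [h2] at hi
          · by_cases h4 : p j = 1 ∨ p j = 3
            · simp [h4] at hj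
            · rw [if_neg h2] at hi; rw [if_neg h4] at hj
              exact pA i j hij hi hj
        · intro i j hij hi hj
          try beta_reduce at hi hj
          by_cases h2 : p i = 1 ∨ p i = 3
          · by_cases h4 : p j = 1 ∨ p j = 3
            · by_cases h3 : j = last
              · subst h3
                have h1 : i ≠ last := ne_of_lt hij
                exact hbelow i (hlt_last i h1) h2
              · exact hinc i j hij (hlt_last j h3) h2 h4
            · rw [if_neg h4] at hj; omega
          · rw [if_neg h2] at hi; omega
        · intro i j hij hi hj
          try beta_reduce at hi hj
          by_cases h2 : p i = 1 ∨ p i = 3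
          · simp [h2] at hi
          · by_cases h4 : p j = 1 ∨ p j = 3
            · simp [h4] at hj
            · rw [if_neg h2] at hi; rw [if_neg h4] at hj
              exact pC i j hij hi hj
        · intro i j hi hj
          try beta_reduce at hi hj
          exfalso
          by_cases h2 : p i = 1 ∨ p i = 3
          · rw [if_pos h2] at hi; omega
          · rw [if_neg h2] at hi; rcases p0 i with h|h|h|h <;> omega
        · intro i j hi hj
          try beta_reduce at hi hj
          have hpi : p i = 0 ∨ p i = 2 := by
            by_cases h2 : p i = 1 ∨ p i = 3
            · rw [if_pos h2] at hi; omega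
            · rw [if_neg h2] at hi; omega
          rcases hj with hj | hj
          · have hpj : p j = 1 ∨ p j = 3 := by
              by_cases h4 : p j = 1 ∨ p j = 3
              · exact h4
              · rw [if_neg h4] at hj; rcases p0 j with h|h|h|h <;> omega
            exact pV i j hpi hpj
          · exfalso
            by_cases h4 : p j = 1 ∨ p j = 3
            · rw [if_pos h4] at hj; omega
            · rw [if_neg h4] at hj; rcases p0 j with h|h|h|h <;> omega
        · intro i j hi hj
          try beta_reduce at hi hj
          exfalso
          by_cases h2 : p i = 1 ∨ p i = 3
          · rw [if_pos h2] at hi; omega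
          · rw [if_neg h2] at hi; rcases p0 i with h|h|h|h <;> omega
    · -- q-side
      have hP : (∃ x y, x < y ∧ y < last ∧ (p x = 1 ∨ p x = 3) ∧ (p y = 1 ∨ p y = 3) ∧
          l.get y < l.get x) ∨
          ((∃ i, i < last ∧ (p i = 1 ∨ p i = 3) ∧ l.get i < l.get last) ∧
           (∃ i, i < last ∧ (p i = 1 ∨ p i = 3) ∧ l.get last < l.get i)) := by
        by_cases hinc : ∀ x y, x < y → y < last → (p x = 1 ∨ p x = 3) →
            (p y = 1 ∨ p y = 3) → l.get x < l.get y
        · right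
          by_cases hab : ∃ i, i < last ∧ (p i = 1 ∨ p i = 3) ∧ l.get last < l.get i
          · refine ⟨?_, hab⟩
            by_contra hnb
            push_neg at hnb
            apply hTnice
            refine ⟨hinc, Or.inl ?_⟩
            intro i hi hti
            try beta_reduce at hi
            have h1 := hnb i hi hti
            have h2 : l.get i ≠ l.get last := fun he => (ne_of_lt hi) (hinj he)
            omega
          · exfalso
            apply hTnice
            refine ⟨hinc, Or.inr ?_⟩
            intro i hi hti
            try beta_reduce at hi
            push_neg at hab
            have h1 := hab i hi hti
            have h2 : l.get i ≠ l.get last := fun he => (ne_of_lt hi) (hinj he)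
            omega
        · left
          push_neg at hinc
          obtain ⟨x, y, hxy, hyl, htx, hty, hc⟩ := hinc
          refine ⟨x, y, hxy, hyl, htx, hty, ?_⟩
          have h2 : l.get x ≠ l.get y := fun he => (ne_of_lt hxy) (hinj he)
          omega
      by_cases hBH : ∃ b, q b = 1
      · by_cases hBT : ∃ jj, q jj = 3 ∧ jj ≠ last
        · -- THE CORE CASE
          obtain ⟨j, hj, hjne⟩ := hBT
          have hjlt : j < last := hlt_last j hjne
          obtain ⟨b0, hb0⟩ := hBH
          set S : Finset (Fin l.length) := Finset.univ.filter (fun i => q i = 1) with hSdef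
          have hSne : S.Nonempty := ⟨b0, Finset.mem_filter.2 ⟨Finset.mem_univ _, hb0⟩⟩
          set m : Fin l.length := S.min' hSne with hmdef
          have hm : q m = 1 := (Finset.mem_filter.1 (S.min'_mem hSne)).2
          have hmmin : ∀ i, q i = 1 → m ≤ i := fun i hi =>
            S.min'_le i (Finset.mem_filter.2 ⟨Finset.mem_univ _, hi⟩)
          -- Lemma 1 : q last = 4
          have hql4 : q last = 4 := by
            have h34 : q last = 3 ∨ q last = 4 := by
              rcases q0 last with h|h|h|h|h
              · exact absurd (q1 last j h (by omega)) (not_lt.2 (hle_last j))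
              · exact absurd (q2 last j (Or.inl h) (Or.inl hj)) (not_lt.2 (hle_last j))
              · exact absurd (q2 last j (Or.inr h) (Or.inl hj)) (not_lt.2 (hle_last j))
              · exact Or.inl h
              · exact Or.inr h
            rcases h34 with h3 | h4
            · exfalso
              -- z < get m
              have hbz : l.get last < l.get m := qV4 last m h3 hm
              have hpm : p m = 1 ∨ p m = 3 := by
                rcases p0 m with h|h|h|h
                · exact absurd (pV m last (Or.inl h) (Or.inr hlast3)) (by omega)
                · exact Or.inl h
                · exact absurd (pV m last (Or.inr h) (Or.inr hlast3)) (by omega)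
                · exact Or.inr h
              have hjnd : p j ≠ 3 := by
                intro hj3
                have h1 := pD j last hjlt hj3 hlast3
                have h2 := qBT j last hjlt hj h3
                omega
              have hpm1 : p m = 1 := by
                rcases hpm with h|h
                · exact h
                · exact absurd (pDsuf m j h (le_of_lt (q2 m j (Or.inl hm) (Or.inl hj)))) hjnd
              rcases hP with ⟨x, y, hxy, hyl, htx, hty, hyx⟩ | ⟨⟨i, hi, hti, hiz⟩, _⟩
              · by_cases hy3 : p y = 3
                · have hyz : l.get last < l.get y := pD y last hyl hy3 hlast3
                  rcases q0 y with h|h|h|h|h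
                  · have h1 := qV5 y j h hj
                    have h2 := qBT j last hjlt hj h3
                    omega
                  · exact hjnd (pDsuf y j hy3 (le_of_lt (q2 y j (Or.inl h) (Or.inl hj))))
                  · have h1 := qV2 y j h hj
                    have h2 := qBT j last hjlt hj h3
                    omega
                  · have h1 := qBT y last hyl h h3
                    omega
                  · have h1 := qV3 y j h hj
                    have h2 := qBT j last hjlt hj h3
                    omega
                · have hy1 : p y = 1 := by rcases hty with h|h; exact h; exact absurd h hy3
                  rcases htx with hx1 | hx3
                  · exact absurd (pB x y hxy hx1 hy1) (by omega)
                  · exact hy3 (pDsuf x y hx3 (le_of_lt hxy))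
              · have hpi1 : p i = 1 := by
                  rcases hti with h|h
                  · exact h
                  · exact absurd (pD i last hi h hlast3) (by omega)
                rcases q0 i with h|h|h|h|h
                · have h1 := qV5 i j h hj
                  have hjp : p j = 1 := by
                    rcases p0 j with h'|h'|h'|h'
                    · exact absurd (pV j i (Or.inl h') (Or.inl hpi1)) (by omega)
                    · exact h'
                    · exact absurd (pV j i (Or.inr h') (Or.inl hpi1)) (by omega)
                    · exact absurd h' hjnd
                  have h2 := pB m j (q2 m j (Or.inl hm) (Or.inl hj)) hpm1 hjp
                  have h3' := qV4 j m hj hm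
                  omega
                · -- q i = 1
                  rcases eq_or_lt_of_le (hmmin i h) with he | hlt'
                  · rw [← he] at hiz; omega
                  · have := qBH m i hlt' hm h
                    omega
                · have h1 := qV2 i j h hj
                  have hjp : p j = 1 := by
                    rcases p0 j with h'|h'|h'|h'
                    · exact absurd (pV j i (Or.inl h') (Or.inl hpi1)) (by omega)
                    · exact h'
                    · exact absurd (pV j i (Or.inr h') (Or.inl hpi1)) (by omega)
                    · exact absurd h' hjnd
                  have h2 := pB m j (q2 m j (Or.inl hm) (Or.inl hj)) hpm1 hjp
                  have h3' := qV4 j m hj hm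
                  omega
                · -- q i = 3
                  have h2 := pB m i (q2 m i (Or.inl hm) (Or.inl h)) hpm1 hpi1
                  omega
                · have h1 := qV3 i j h hj
                  have hjp : p j = 1 := by
                    rcases p0 j with h'|h'|h'|h'
                    · exact absurd (pV j i (Or.inl h') (Or.inl hpi1)) (by omega)
                    · exact h'
                    · exact absurd (pV j i (Or.inr h') (Or.inl hpi1)) (by omega)
                    · exact absurd h' hjnd
                  have h2 := pB m j (q2 m j (Or.inl hm) (Or.inl hj)) hpm1 hjp
                  have h3' := qV4 j m hj hm
                  omega
            · exact h4
          -- dagger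
          have dag : ∀ w, (q w = 1 ∨ q w = 2 ∨ q w = 3) → (p w = 1 ∨ p w = 3) := by
            intro w hw
            have hwz : l.get last < l.get w := by
              rcases hw with h|h|h
              · exact qV8 last w hql4 h
              · exact qV1 last w hql4 h
              · exact qV3 last w hql4 h
            rcases p0 w with h|h|h|h
            · exact absurd (pV w last (Or.inl h) (Or.inr hlast3)) (by omega)
            · exact Or.inl h
            · exact absurd (pV w last (Or.inr h) (Or.inr hlast3)) (by omega)
            · exact Or.inr h
          have hpm' : p m = 1 ∨ p m = 3 := dag m (Or.inl hm)
          -- L2 : BT ⊆ D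
          have L2 : ∀ w, q w = 3 → p w = 3 := by
            intro w hw
            by_contra hw3
            have hw1 : p w = 1 := by
              rcases dag w (Or.inr (Or.inr hw)) with h|h
              · exact h
              · exact absurd h hw3
            rcases hpm' with h|h
            · have h1 := pB m w (q2 m w (Or.inl hm) (Or.inl hw)) h hw1
              have h2 := qV4 w m hw hm
              omega
            · exact hw3 (pDsuf m w h (le_of_lt (q2 m w (Or.inl hm) (Or.inl hw))))
          -- L4 : CH only before m
          have L4 : ∀ w, q w = 2 → w < m := by
            intro w hw
            by_contra hlt'
            have hmw : m < w := lt_of_le_of_ne (not_lt.1 hlt')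
              (fun he => by rw [he] at hm; omega)
            rcases dag w (Or.inr (Or.inl hw)) with hw1 | hw3
            · rcases hpm' with h|h
              · have h1 := pB m w hmw h hw1
                have h2 := qV7 w m hw hm
                omega
              · have := pDsuf m w h (le_of_lt hmw); omega
            · have hwj : w < j := q2 w j (Or.inr hw) (Or.inl hj)
              have h1 := pD w j hwj hw3 (L2 j hj)
              have h2 := qV2 w j hw hj
              omega
          -- L5' : no CT before any BT
          have L5 : ∀ w w', q w = 4 → q w' = 3 → ¬ w < w' := by
            intro w w' hw hw' hww
            have hw'3 : p w' = 3 := L2 w' hw'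
            have hw'lt : w' ≠ last := fun he => by rw [he] at hw'; omega
            have hwlast : w < last := lt_trans hww (hlt_last w' hw'lt)
            have hwz : l.get last < l.get w := qCT w last hwlast hw hql4
            rcases p0 w with h|h|h|h
            · exact absurd (pV w last (Or.inl h) (Or.inr hlast3)) (by omega)
            · -- p w = 1
              have hmw : m < w := q2 m w (Or.inl hm) (Or.inr hw)
              rcases hpm' with h'|h'
              · have h1 := pB m w hmw h' h
                have h2 := qV8 w m hw hm
                omega
              · have := pDsuf m w h' (le_of_lt hmw); omega
            · exact absurd (pV w last (Or.inr h) (Or.inr hlast3)) (by omega)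
            · have h1 := pD w w' hww h hw'3
              have h2 := qV3 w w' hw hw'
              omega
          -- L6 : CH have p-role B
          have L6 : ∀ w, q w = 2 → p w = 1 := by
            intro w hw
            rcases dag w (Or.inr (Or.inl hw)) with h|h
            · exact h
            · exfalso
              have hwm : w < m := L4 w hw
              have hm3 : p m = 3 := pDsuf w m h (le_of_lt hwm)
              have h1 := pD w m hwm h hm3
              have h2 := qV7 w m hw hm
              omega
          -- L7 : E not in D
          have L7 : ∀ w, q w = 0 → p w ≠ 3 := by
            intro w hw hw3
            have hwj : w < j := q1 w j hw (by omega)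
            have h1 := pD w j hwj hw3 (L2 j hj)
            have h2 := qV5 w j hw hj
            omega
          -- build
          refine buildG3 l hinj (fun i => if q i = 1 then 1 else if i < m then 0 else 2)
            ?_ ?_ ?_ ?_ ?_ ?_ ?_ ?_ ?_
          · intro i
            by_cases h1 : q i = 1
            · simp [h1]
            · by_cases h2 : i < m <;> simp [h1, h2]
          · intro i j hi hj
            try beta_reduce at hi hj
            have h1 : q i ≠ 1 := by
              intro h; rw [if_pos h] at hi; omega
            rw [if_neg h1] at hi
            have h2 : i < m := by
              by_contra h2; rw [if_neg h2] at hi; omega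
            by_cases h3 : q j = 1
            · exact lt_of_lt_of_le h2 (hmmin j h3)
            · rw [if_neg h3] at hj
              have h4 : ¬ j < m := by
                intro h4; rw [if_pos h4] at hj; omega
              exact lt_of_lt_of_le h2 (not_lt.1 h4)
          · intro i j hi hj
            try beta_reduce at hi hj
            exfalso
            by_cases h3 : q j = 1
            · rw [if_pos h3] at hj; omega
            · rw [if_neg h3] at hj
              by_cases h4 : j < m
              · rw [if_pos h4] at hj; omega
              · rw [if_neg h4] at hj; omega
          · -- o3 : GOAL (a)
            intro x y hxy hx hy
            try beta_reduce at hx hy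
            have hx1 : q x ≠ 1 := fun h => by rw [if_pos h] at hx; omega
            have hy1 : q y ≠ 1 := fun h => by rw [if_pos h] at hy; omega
            rw [if_neg hx1] at hx; rw [if_neg hy1] at hy
            have hxm : x < m := by by_contra h; rw [if_neg h] at hx; omega
            have hym : y < m := by by_contra h; rw [if_neg h] at hy; omega
            rcases q0 y with h0|h0|h0|h0|h0
            · -- y is E, so x is E
              have hx0 : q x = 0 := by
                by_contra hx0
                exact absurd (q1 y x h0 hx0) (not_lt.2 (le_of_lt hxy))
              exact qE x y hxy hx0 h0
            · exact absurd h0 hy1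
            · -- y is CH : p y = 1
              have hpy : p y = 1 := L6 y h0
              rcases q0 x with h|h|h|h|h
              · -- x is E
                rcases p0 x with h'|h'|h'|h'
                · exact pV x y (Or.inl h') (Or.inl hpy)
                · exact pB x y hxy h' hpy
                · exact pV x y (Or.inr h') (Or.inl hpy)
                · exact absurd h' (L7 x h)
              · exact absurd h hx1
              · exact pB x y hxy (L6 x h) hpy
              · exact absurd (q2 m x (Or.inl hm) (Or.inl h)) (not_lt.2 (le_of_lt hxm))
              · exact absurd (q2 m x (Or.inl hm) (Or.inr h)) (not_lt.2 (le_of_lt hxm))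
            · exact absurd (q2 m y (Or.inl hm) (Or.inl h0)) (not_lt.2 (le_of_lt hym))
            · exact absurd (q2 m y (Or.inl hm) (Or.inr h0)) (not_lt.2 (le_of_lt hym))
          · intro i j hij hi hj
            try beta_reduce at hi hj
            have h1 : q i = 1 := by
              by_contra h1
              rw [if_neg h1] at hi
              by_cases h2 : i < m
              · rw [if_pos h2] at hi; omega
              · rw [if_neg h2] at hi; omega
            have h3 : q j = 1 := by
              by_contra h3
              rw [if_neg h3] at hj
              by_cases h4 : j < m
              · rw [if_pos h4] at hj; omega
              · rw [if_neg h4] at hj; omega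
            exact qBH i j hij h1 h3
          · -- o5 : GOAL (b)
            intro x y hxy hx hy
            try beta_reduce at hx hy
            have hx1 : q x ≠ 1 := fun h => by rw [if_pos h] at hx; omega
            have hy1 : q y ≠ 1 := fun h => by rw [if_pos h] at hy; omega
            rw [if_neg hx1] at hx; rw [if_neg hy1] at hy
            have hxm : ¬ x < m := by intro h; rw [if_pos h] at hx; omega
            have hym : ¬ y < m := by intro h; rw [if_pos h] at hy; omega
            have hxq : q x = 3 ∨ q x = 4 := by
              rcases q0 x with h|h|h|h|h
              · exact absurd (q1 x m h (by omega)) hxm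
              · exact absurd h hx1
              · exact absurd (L4 x h) hxm
              · exact Or.inl h
              · exact Or.inr h
            have hyq : q y = 3 ∨ q y = 4 := by
              rcases q0 y with h|h|h|h|h
              · exact absurd (q1 y m h (by omega)) hym
              · exact absurd h hy1
              · exact absurd (L4 y h) hym
              · exact Or.inl h
              · exact Or.inr h
            rcases hxq with hx3 | hx4
            · rcases hyq with hy3 | hy4
              · exact pD x y hxy (L2 x hx3) (L2 y hy3)
              · exact qV3 y x hy4 hx3
            · rcases hyq with hy3 | hy4
              · exact absurd hxy (L5 x y hx4 hy3)
              · exact qCT x y hxy hx4 hy4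
          · intro i j hi hj
            try beta_reduce at hi hj
            exfalso
            by_cases h3 : q i = 1
            · rw [if_pos h3] at hi; omega
            · rw [if_neg h3] at hi
              by_cases h4 : i < m
              · rw [if_pos h4] at hi; omega
              · rw [if_neg h4] at hi; omega
          · intro i j hi hj
            try beta_reduce at hi hj
            have h1 : q i ≠ 1 := by
              rcases hi with hi|hi
              · intro h; rw [if_pos h] at hi; omega
              · intro h; rw [if_pos h] at hi; omega
            have h3 : q j = 1 := by
              rcases hj with hj|hj
              · by_contra h3
                rw [if_neg h3] at hj
                by_cases h4 : j < m
                · rw [if_pos h4] at hj; omega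
                · rw [if_neg h4] at hj; omega
              · exfalso
                by_cases h3 : q j = 1
                · rw [if_pos h3] at hj; omega
                · rw [if_neg h3] at hj
                  by_cases h4 : j < m
                  · rw [if_pos h4] at hj; omega
                  · rw [if_neg h4] at hj; omega
            rcases q0 i with h|h|h|h|h
            · exact qV6 i j h h3
            · exact absurd h h1
            · exact qV7 i j h h3
            · exact qV4 i j h h3
            · exact qV8 i j h h3
          · intro i j hi hj
            try beta_reduce at hi hj
            exfalso
            by_cases h3 : q i = 1
            · rw [if_pos h3] at hi; omega
            · rw [if_neg h3] at hi
              by_cases h4 : i < m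
              · rw [if_pos h4] at hi; omega
              · rw [if_neg h4] at hi; omega
        · -- BT ⊆ {last}
          have hBT3 : ∀ i, q i = 3 → i = last := by
            intro i hi
            by_contra h
            exact hBT ⟨i, hi, h⟩
          refine buildG3 l hinj
            (fun i => if q i = 1 then 1 else if q i = 3 then 3 else if q i = 0 then 0 else 2)
            ?_ ?_ ?_ ?_ ?_ ?_ ?_ ?_ ?_
          · intro i
            rcases q0 i with h|h|h|h|h <;> simp [h]
          · intro i j hi hj
            try beta_reduce at hi hj
            have h0i : q i = 0 := by
              rcases q0 i with h|h|h|h|h <;> simp [h] at hi <;> exact h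
            have h0j : q j ≠ 0 := by intro h; simp [h] at hj
            exact q1 i j h0i h0j
          · intro i j hi hj
            try beta_reduce at hi hj
            have h3j : q j = 3 := by
              rcases q0 j with h|h|h|h|h <;> simp [h] at hj <;> exact h
            have h3i : q i ≠ 3 := by intro h; simp [h] at hi
            have hjl : j = last := hBT3 j h3j
            subst hjl
            exact hlt_last i (fun he => h3i (he ▸ h3j))
          · intro i j hij hi hj
            try beta_reduce at hi hj
            have h0i : q i = 0 := by
              rcases q0 i with h|h|h|h|h <;> simp [h] at hi <;> exact h
            have h0j : q j = 0 := by
              rcases q0 j with h|h|h|h|h <;> simp [h] at hj <;> exact h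
            exact qE i j hij h0i h0j
          · intro i j hij hi hj
            try beta_reduce at hi hj
            have h1i : q i = 1 := by
              rcases q0 i with h|h|h|h|h <;> simp [h] at hi <;> exact h
            have h1j : q j = 1 := by
              rcases q0 j with h|h|h|h|h <;> simp [h] at hj <;> exact h
            exact qBH i j hij h1i h1j
          · intro i j hij hi hj
            try beta_reduce at hi hj
            have hqi : q i = 2 ∨ q i = 4 := by
              rcases q0 i with h|h|h|h|h <;> simp [h] at hi <;>
                first | exact Or.inl h | exact Or.inr h
            have hqj : q j = 2 ∨ q j = 4 := by
              rcases q0 j with h|h|h|h|h <;> simp [h] at hj <;>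
                first | exact Or.inl h | exact Or.inr h
            rcases hqi with h2i | h4i
            · rcases hqj with h2j | h4j
              · exact qCH i j hij h2i h2j
              · exact qV1 j i h4j h2i
            · rcases hqj with h2j | h4j
              · exact absurd (q2 j i (Or.inr h2j) (Or.inr h4i)) (not_lt.2 (le_of_lt hij))
              · exact qCT i j hij h4i h4j
          · intro i j hi hj
            try beta_reduce at hi hj
            have h3i : q i = 3 := by
              rcases q0 i with h|h|h|h|h <;> simp [h] at hi <;> exact h
            have h3j : q j = 3 := by
              rcases q0 j with h|h|h|h|h <;> simp [h] at hj <;> exact h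
            rw [hBT3 i h3i, hBT3 j h3j]
          · intro i j hi hj
            try beta_reduce at hi hj
            have hqi : q i = 0 ∨ q i = 2 ∨ q i = 4 := by
              rcases hi with hi|hi <;>
              · rcases q0 i with h|h|h|h|h <;> simp [h] at hi <;>
                  first
                  | exact Or.inl h
                  | exact Or.inr (Or.inl h)
                  | exact Or.inr (Or.inr h)
            have hqj : q j = 1 ∨ q j = 3 := by
              rcases hj with hj|hj <;>
              · rcases q0 j with h|h|h|h|h <;> simp [h] at hj <;>
                  first | exact Or.inl h | exact Or.inr h
            rcases hqi with h|h|h <;> rcases hqj with h'|h'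
            · exact qV6 i j h h'
            · exact qV5 i j h h'
            · exact qV7 i j h h'
            · exact qV2 i j h h'
            · exact qV8 i j h h'
            · exact qV3 i j h h'
          · intro i j hi hj
            try beta_reduce at hi hj
            have h3i : q i = 3 := by
              rcases q0 i with h|h|h|h|h <;> simp [h] at hi <;> exact h
            have h1j : q j = 1 := by
              rcases q0 j with h|h|h|h|h <;> simp [h] at hj <;> exact h
            exact qV4 i j h3i h1j
      · -- no BH
        have hBH' : ∀ i, q i ≠ 1 := by
          intro i h; exact hBH ⟨i, h⟩
        refine buildG3 l hinj (fun i => if q i = 0 then 0 else if q i = 3 then 1 else 2)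
          ?_ ?_ ?_ ?_ ?_ ?_ ?_ ?_ ?_
        · intro i
          by_cases h1 : q i = 0
          · simp [h1]
          · by_cases h2 : q i = 3 <;> simp [h1, h2]
        · intro i j hi hj
          try beta_reduce at hi hj
          have h0i : q i = 0 := by
            by_contra h
            rw [if_neg h] at hi
            by_cases h2 : q i = 3
            · rw [if_pos h2] at hi; omega
            · rw [if_neg h2] at hi; omega
          have h0j : q j ≠ 0 := by
            intro h; rw [if_pos h] at hj; omega
          exact q1 i j h0i h0j
        · intro i j hi hj
          try beta_reduce at hi hj
          exfalso
          by_cases h1 : q j = 0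
          · rw [if_pos h1] at hj; omega
          · rw [if_neg h1] at hj
            by_cases h2 : q j = 3
            · rw [if_pos h2] at hj; omega
            · rw [if_neg h2] at hj; omega
        · intro i j hij hi hj
          try beta_reduce at hi hj
          have h0i : q i = 0 := by
            by_contra h
            rw [if_neg h] at hi
            by_cases h2 : q i = 3
            · rw [if_pos h2] at hi; omega
            · rw [if_neg h2] at hi; omega
          have h0j : q j = 0 := by
            by_contra h
            rw [if_neg h] at hj
            by_cases h2 : q j = 3
            · rw [if_pos h2] at hj; omega
            · rw [if_neg h2] at hj; omega
          exact qE i j hij h0i h0j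
        · intro i j hij hi hj
          try beta_reduce at hi hj
          have h3i : q i = 3 := by
            by_cases h1 : q i = 0
            · rw [if_pos h1] at hi; omega
            · rw [if_neg h1] at hi
              by_cases h2 : q i = 3
              · exact h2
              · rw [if_neg h2] at hi; omega
          have h3j : q j = 3 := by
            by_cases h1 : q j = 0
            · rw [if_pos h1] at hj; omega
            · rw [if_neg h1] at hj
              by_cases h2 : q j = 3
              · exact h2
              · rw [if_neg h2] at hj; omega
          exact qBT i j hij h3i h3j
        · intro i j hij hi hj
          try beta_reduce at hi hj
          have hqi : q i = 2 ∨ q i = 4 := by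
            by_cases h1 : q i = 0
            · rw [if_pos h1] at hi; omega
            · rw [if_neg h1] at hi
              by_cases h2 : q i = 3
              · rw [if_pos h2] at hi; omega
              · rcases q0 i with h|h|h|h|h
                · omega
                · exact absurd h (hBH' i)
                · exact Or.inl h
                · omega
                · exact Or.inr h
          have hqj : q j = 2 ∨ q j = 4 := by
            by_cases h1 : q j = 0
            · rw [if_pos h1] at hj; omega
            · rw [if_neg h1] at hj
              by_cases h2 : q j = 3
              · rw [if_pos h2] at hj; omega
              · rcases q0 j with h|h|h|h|h
                · omega
                · exact absurd h (hBH' j)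
                · exact Or.inl h
                · omega
                · exact Or.inr h
          rcases hqi with h2i | h4i
          · rcases hqj with h2j | h4j
            · exact qCH i j hij h2i h2j
            · exact qV1 j i h4j h2i
          · rcases hqj with h2j | h4j
            · exact absurd (q2 j i (Or.inr h2j) (Or.inr h4i)) (not_lt.2 (le_of_lt hij))
            · exact qCT i j hij h4i h4j
        · intro i j hi hj
          try beta_reduce at hi hj
          exfalso
          by_cases h1 : q i = 0
          · rw [if_pos h1] at hi; omega
          · rw [if_neg h1] at hi
            by_cases h2 : q i = 3
            · rw [if_pos h2] at hi; omega
            · rw [if_neg h2] at hi; omega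
        · intro i j hi hj
          try beta_reduce at hi hj
          have h3j : q j = 3 := by
            rcases hj with hj|hj
            · by_cases h1 : q j = 0
              · rw [if_pos h1] at hj; omega
              · rw [if_neg h1] at hj
                by_cases h2 : q j = 3
                · exact h2
                · rw [if_neg h2] at hj; omega
            · exfalso
              by_cases h1 : q j = 0
              · rw [if_pos h1] at hj; omega
              · rw [if_neg h1] at hj
                by_cases h2 : q j = 3
                · rw [if_pos h2] at hj; omega
                · rw [if_neg h2] at hj; omega
          rcases q0 i with h|h|h|h|h
          · exact qV5 i j h h3j
          · exact absurd h (hBH' i)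
          · exact qV2 i j h h3j
          · exfalso
            rcases hi with hi|hi <;> rw [if_neg (by omega), if_pos h] at hi <;> omega
          · exact qV3 i j h h3j
        · intro i j hi hj
          try beta_reduce at hi hj
          exfalso
          by_cases h1 : q i = 0
          · rw [if_pos h1] at hi; omega
          · rw [if_neg h1] at hi
            by_cases h2 : q i = 3
            · rw [if_pos h2] at hi; omega
            · rw [if_neg h2] at hi; omega
  · -- no D at all : use p-partition directly
    have hD' : ∀ i, p i ≠ 3 := fun i h => hD ⟨i, h⟩
    refine buildG3 l hinj p ?_ ?_ ?_ ?_ ?_ ?_ ?_ ?_ ?_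
    · intro i
      rcases p0 i with h|h|h|h
      · exact Or.inl h
      · exact Or.inr (Or.inl h)
      · exact Or.inr (Or.inr (Or.inl h))
      · exact absurd h (hD' i)
    · exact p1
    · intro i j hi hj
      try beta_reduce at hi hj
      exact absurd hj (hD' j)
    · exact pA
    · exact pB
    · exact pC
    · intro i j hi hj
      try beta_reduce at hi hj
      exact absurd hj (hD' j)
    · intro i j hi hj
      try beta_reduce at hi hj
      rcases hj with hj | hj
      · exact pV i j hi (Or.inl hj)
      · exact absurd hj (hD' j)
    · intro i j hi hj
      try beta_reduce at hi hj
      exact absurd hi (hD' i)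

set_option maxHeartbeats 1000000 in
lemma backward (l : List ℕ) (hl : IsPermList l)
    (h1 : DrawnOn l G1fig) (h2 : DrawnOn l G2fig) : DrawnOn l G3fig := by
  classical
  have hinj : Function.Injective l.get :=
    List.nodup_iff_injective_get.1 (hl.nodup_iff.2 List.nodup_range)
  obtain ⟨pd, hmem1, hx1, hy1⟩ := h1
  obtain ⟨qd, hmem2, hx2, hy2⟩ := h2
  have hyne1 : ∀ i j : Fin l.length, i ≠ j → (pd i).2 ≠ (pd j).2 := by
    intro i j hne he
    have hf : l.get i ≠ l.get j := fun hc => hne (hinj hc)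
    have c1 : ¬ l.get i < l.get j := fun hc => absurd ((hy1 i j).1 hc) (by rw [he]; exact lt_irrefl _)
    have c2 : ¬ l.get j < l.get i := fun hc => absurd ((hy1 j i).1 hc) (by rw [he]; exact lt_irrefl _)
    omega
  have hyne2 : ∀ i j : Fin l.length, i ≠ j → (qd i).2 ≠ (qd j).2 := by
    intro i j hne he
    have hf : l.get i ≠ l.get j := fun hc => hne (hinj hc)
    have c1 : ¬ l.get i < l.get j := fun hc => absurd ((hy2 i j).1 hc) (by rw [he]; exact lt_irrefl _)
    have c2 : ¬ l.get j < l.get i := fun hc => absurd ((hy2 j i).1 hc) (by rw [he]; exact lt_irrefl _)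
    omega
  have hxne1 : ∀ i j : Fin l.length, i ≠ j → (pd i).1 ≠ (pd j).1 :=
    fun i j hne he => hne (hx1.injective he)
  have hxne2 : ∀ i j : Fin l.length, i ≠ j → (qd i).1 ≠ (qd j).1 :=
    fun i j hne he => hne (hx2.injective he)
  set pr : Fin l.length → ℕ := fun i =>
    if (pd i).1 ≤ 1 then 0 else if 2 < (pd i).1 then 3
    else if (pd i).2 = (pd i).1 then 1 else 2 with hpr
  set qr : Fin l.length → ℕ := fun i =>
    if (qd i).2 = (qd i).1 then 0 else if (qd i).2 = (qd i).1 + 1 then 1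
    else if (qd i).2 = (qd i).1 - 1 ∧ (qd i).1 ≠ 5/2 then 3
    else if 1 < (qd i).2 then 2 else 4 with hqr
  have prspec : ∀ i : Fin l.length,
      (pr i = 0 ∧ (pd i).2 = (pd i).1 ∧ (pd i).1 ≤ 1) ∨
      (pr i = 1 ∧ (pd i).2 = (pd i).1 ∧ 1 < (pd i).1 ∧ (pd i).1 ≤ 2) ∨
      (pr i = 2 ∧ (pd i).2 = 2 - (pd i).1 ∧ 1 < (pd i).1 ∧ (pd i).1 ≤ 2 ∧ (pd i).2 < 1) ∨
      (pr i = 3 ∧ (pd i).2 = 4 - (pd i).1 ∧ 2 < (pd i).1 ∧ 1 ≤ (pd i).2 ∧ (pd i).2 ≤ 2) := by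
    intro i
    have hs := g1shapes (hmem1 i)
    by_cases c1 : (pd i).1 ≤ 1
    · left
      refine ⟨by simp only [hpr]; rw [if_pos c1], ?_, c1⟩
      rcases hs with ⟨e,a,b⟩|⟨e,a,b⟩|⟨e,a,b⟩
      · exact e
      · have hx : (pd i).1 = 1 := le_antisymm c1 a
        rw [e, hx]; norm_num
      · linarith
    · by_cases c2 : 2 < (pd i).1
      · right; right; right
        refine ⟨by simp only [hpr]; rw [if_neg c1, if_pos c2], ?_, c2, ?_, ?_⟩ <;>
          rcases hs with ⟨e,a,b⟩|⟨e,a,b⟩|⟨e,a,b⟩ <;> first | linarith | (rw [e]; linarith) | exact e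
      · by_cases c3 : (pd i).2 = (pd i).1
        · right; left
          exact ⟨by simp only [hpr]; rw [if_neg c1, if_neg c2, if_pos c3], c3, by linarith, by linarith⟩
        · right; right; left
          refine ⟨by simp only [hpr]; rw [if_neg c1, if_neg c2, if_neg c3], ?_, by linarith, by linarith, ?_⟩
          · rcases hs with ⟨e,a,b⟩|⟨e,a,b⟩|⟨e,a,b⟩
            · exact absurd e c3
            · exact e
            · exfalso
              have hx : (pd i).1 = 2 := by linarith
              exact c3 (by rw [e, hx]; norm_num)
          · rcases hs with ⟨e,a,b⟩|⟨e,a,b⟩|⟨e,a,b⟩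
            · exact absurd e c3
            · rw [e]; linarith
            · exfalso
              have hx : (pd i).1 = 2 := by linarith
              exact c3 (by rw [e, hx]; norm_num)
  have qrspec : ∀ i : Fin l.length,
      (qr i = 0 ∧ (qd i).2 = (qd i).1 ∧ 0 ≤ (qd i).1 ∧ (qd i).1 ≤ 2) ∨
      (qr i = 1 ∧ 2 ≤ (qd i).1 ∧ (qd i).1 ≤ 3 ∧ 3 ≤ (qd i).2 ∧ (qd i).2 = (qd i).1 + 1) ∨
      (qr i = 2 ∧ 2 < (qd i).1 ∧ (qd i).1 < 3 ∧ 1 < (qd i).2 ∧ (qd i).2 < 2 ∧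
        (qd i).2 = 4 - (qd i).1) ∨
      (qr i = 3 ∧ 3 ≤ (qd i).1 ∧ (qd i).1 ≤ 4 ∧ 2 ≤ (qd i).2 ∧ (qd i).2 ≤ 3 ∧
        (qd i).2 = (qd i).1 - 1) ∨
      (qr i = 4 ∧ 3 ≤ (qd i).1 ∧ (qd i).2 ≤ 1 ∧ (qd i).2 = 4 - (qd i).1) := by
    intro i
    have hs := g2shapes (hmem2 i)
    rcases hs with ⟨e,a,b⟩|⟨e,a,b⟩|⟨e,a,b⟩|⟨e,a,b⟩
    · left
      exact ⟨by simp only [hqr]; rw [if_pos e], e, a, b⟩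
    · right; left
      refine ⟨?_, a, b, by linarith, e⟩
      simp only [hqr]
      rw [if_neg (by rw [e]; intro hc; linarith), if_pos e]
    · right; right; right; left
      refine ⟨?_, a, b, by linarith, by linarith, e⟩
      simp only [hqr]
      rw [if_neg (by rw [e]; intro hc; linarith), if_neg (by rw [e]; intro hc; linarith),
        if_pos ⟨e, by intro hc; rw [hc] at a; linarith⟩]
    · -- Q : v = 4 - u
      by_cases c0 : (qd i).1 = 2
      · left
        have he : (qd i).2 = (qd i).1 := by rw [e, c0]; norm_num
        exact ⟨by simp only [hqr]; rw [if_pos he], he, by linarith, by linarith⟩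
      · have ha : 2 < (qd i).1 := lt_of_le_of_ne a (Ne.symm c0)
        have hc1 : ¬ (qd i).2 = (qd i).1 := by rw [e]; intro hc; apply c0; linarith
        have hc2 : ¬ (qd i).2 = (qd i).1 + 1 := by rw [e]; intro hc; linarith
        have hc3 : ¬ ((qd i).2 = (qd i).1 - 1 ∧ (qd i).1 ≠ 5/2) := by
          rintro ⟨hh, hn⟩
          rw [e] at hh
          exact hn (by linarith)
        by_cases c4 : 1 < (qd i).2
        · right; right; left
          refine ⟨?_, ha, by rw [e] at c4; linarith, c4, by rw [e]; linarith, e⟩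
          simp only [hqr]
          rw [if_neg hc1, if_neg hc2, if_neg hc3, if_pos c4]
        · right; right; right; right
          refine ⟨?_, by rw [e] at c4; push_neg at c4; linarith, by linarith [not_lt.1 c4], e⟩
          simp only [hqr]
          rw [if_neg hc1, if_neg hc2, if_neg hc3, if_neg c4]
  -- p obligations
  have p0 : ∀ i, pr i = 0 ∨ pr i = 1 ∨ pr i = 2 ∨ pr i = 3 := by
    intro i
    rcases prspec i with ⟨h,_⟩|⟨h,_⟩|⟨h,_⟩|⟨h,_⟩ <;> omega
  have p1 : ∀ i j, pr i = 0 → pr j ≠ 0 → i < j := by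
    intro i j hi hj
    have hne : i ≠ j := fun he => hj (he ▸ hi)
    have hxi : (pd i).1 ≤ 1 := by
      rcases prspec i with ⟨h,_,h2⟩|⟨h,_⟩|⟨h,_⟩|⟨h,_⟩ <;> first | exact h2 | omega
    have hxj : 1 < (pd j).1 := by
      rcases prspec j with ⟨h,_⟩|⟨h,_,h2,_⟩|⟨h,_,h2,_⟩|⟨h,_,h2,_⟩ <;>
        first | omega | exact h2 | linarith
    exact hx1.lt_iff_lt.1 (by linarith)
  have p2 : ∀ i j, pr i ≠ 3 → pr j = 3 → i < j := by
    intro i j hi hj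
    have hxi : (pd i).1 ≤ 2 := by
      rcases prspec i with ⟨h,_,h2⟩|⟨h,_,_,h2⟩|⟨h,_,_,h2,_⟩|⟨h,_⟩ <;>
        first | omega | linarith | exact h2
    have hxj : 2 < (pd j).1 := by
      rcases prspec j with ⟨h,_⟩|⟨h,_⟩|⟨h,_⟩|⟨h,_,h2,_⟩ <;> first | omega | exact h2
    exact hx1.lt_iff_lt.1 (by linarith)
  have pA : ∀ i j, i < j → pr i = 0 → pr j = 0 → l.get i < l.get j := by
    intro i j hij hi hj
    have ei : (pd i).2 = (pd i).1 := by
      rcases prspec i with ⟨h,h1,_⟩|⟨h,_⟩|⟨h,_⟩|⟨h,_⟩ <;> first | exact h1 | omega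
    have ej : (pd j).2 = (pd j).1 := by
      rcases prspec j with ⟨h,h1,_⟩|⟨h,_⟩|⟨h,_⟩|⟨h,_⟩ <;> first | exact h1 | omega
    exact (hy1 i j).2 (by rw [ei, ej]; exact hx1 hij)
  have pB : ∀ i j, i < j → pr i = 1 → pr j = 1 → l.get i < l.get j := by
    intro i j hij hi hj
    have ei : (pd i).2 = (pd i).1 := by
      rcases prspec i with ⟨h,_⟩|⟨h,h1,_⟩|⟨h,_⟩|⟨h,_⟩ <;> first | exact h1 | omega
    have ej : (pd j).2 = (pd j).1 := by
      rcases prspec j with ⟨h,_⟩|⟨h,h1,_⟩|⟨h,_⟩|⟨h,_⟩ <;> first | exact h1 | omega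
    exact (hy1 i j).2 (by rw [ei, ej]; exact hx1 hij)
  have pC : ∀ i j, i < j → pr i = 2 → pr j = 2 → l.get j < l.get i := by
    intro i j hij hi hj
    have ei : (pd i).2 = 2 - (pd i).1 := by
      rcases prspec i with ⟨h,_⟩|⟨h,_⟩|⟨h,h1,_⟩|⟨h,_⟩ <;> first | exact h1 | omega
    have ej : (pd j).2 = 2 - (pd j).1 := by
      rcases prspec j with ⟨h,_⟩|⟨h,_⟩|⟨h,h1,_⟩|⟨h,_⟩ <;> first | exact h1 | omega
    refine (hy1 j i).2 ?_
    rw [ei, ej]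
    have := hx1 hij
    linarith
  have pD : ∀ i j, i < j → pr i = 3 → pr j = 3 → l.get j < l.get i := by
    intro i j hij hi hj
    have ei : (pd i).2 = 4 - (pd i).1 := by
      rcases prspec i with ⟨h,_⟩|⟨h,_⟩|⟨h,_⟩|⟨h,h1,_⟩ <;> first | exact h1 | omega
    have ej : (pd j).2 = 4 - (pd j).1 := by
      rcases prspec j with ⟨h,_⟩|⟨h,_⟩|⟨h,_⟩|⟨h,h1,_⟩ <;> first | exact h1 | omega
    refine (hy1 j i).2 ?_
    rw [ei, ej]
    have := hx1 hij
    linarith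
  have pV : ∀ i j, (pr i = 0 ∨ pr i = 2) → (pr j = 1 ∨ pr j = 3) → l.get i < l.get j := by
    intro i j hi hj
    have hne : i ≠ j := by
      intro he
      subst he
      rcases hi with h|h <;> rcases hj with h'|h' <;> omega
    have hyi : (pd i).2 ≤ 1 := by
      rcases prspec i with ⟨h,h1,h2⟩|⟨h,_⟩|⟨h,_,_,_,h2⟩|⟨h,_⟩ <;>
        first | omega | (rw [h1]; exact h2) | linarith
    have hyj : 1 ≤ (pd j).2 := by
      rcases prspec j with ⟨h,_⟩|⟨h,h1,h2,_⟩|⟨h,_⟩|⟨h,_,_,h2,_⟩ <;>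
        first | omega | (rw [h1]; linarith) | exact h2
    exact (hy1 i j).2 (lt_of_le_of_ne (le_trans hyi hyj) (hyne1 i j hne))
  -- q obligations
  have q0 : ∀ i, qr i = 0 ∨ qr i = 1 ∨ qr i = 2 ∨ qr i = 3 ∨ qr i = 4 := by
    intro i
    rcases qrspec i with ⟨h,_⟩|⟨h,_⟩|⟨h,_⟩|⟨h,_⟩|⟨h,_⟩ <;> omega
  have q1 : ∀ i j, qr i = 0 → qr j ≠ 0 → i < j := by
    intro i j hi hj
    have hne : i ≠ j := fun he => hj (he ▸ hi)
    have hxi : (qd i).1 ≤ 2 := by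
      rcases qrspec i with ⟨h,_,_,h2⟩|⟨h,_⟩|⟨h,_⟩|⟨h,_⟩|⟨h,_⟩ <;> first | exact h2 | omega
    have hxj : 2 ≤ (qd j).1 := by
      rcases qrspec j with ⟨h,_⟩|⟨h,h2,_⟩|⟨h,h2,_⟩|⟨h,h2,_⟩|⟨h,h2,_⟩ <;>
        first | omega | exact h2 | linarith
    exact hx2.lt_iff_lt.1 (lt_of_le_of_ne (le_trans hxi hxj) (hxne2 i j hne))
  have q2 : ∀ i j, (qr i = 1 ∨ qr i = 2) → (qr j = 3 ∨ qr j = 4) → i < j := by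
    intro i j hi hj
    have hne : i ≠ j := by
      intro he; subst he
      rcases hi with h|h <;> rcases hj with h'|h' <;> omega
    have hxi : (qd i).1 ≤ 3 := by
      rcases qrspec i with ⟨h,_⟩|⟨h,_,h2,_⟩|⟨h,_,h2,_⟩|⟨h,_⟩|⟨h,_⟩ <;>
        first | omega | exact h2 | linarith
    have hxj : 3 ≤ (qd j).1 := by
      rcases qrspec j with ⟨h,_⟩|⟨h,_⟩|⟨h,_⟩|⟨h,h2,_⟩|⟨h,h2,_⟩ <;> first | omega | exact h2
    exact hx2.lt_iff_lt.1 (lt_of_le_of_ne (le_trans hxi hxj) (hxne2 i j hne))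
  have qE : ∀ i j, i < j → qr i = 0 → qr j = 0 → l.get i < l.get j := by
    intro i j hij hi hj
    have ei : (qd i).2 = (qd i).1 := by
      rcases qrspec i with ⟨h,h1,_⟩|⟨h,_⟩|⟨h,_⟩|⟨h,_⟩|⟨h,_⟩ <;> first | exact h1 | omega
    have ej : (qd j).2 = (qd j).1 := by
      rcases qrspec j with ⟨h,h1,_⟩|⟨h,_⟩|⟨h,_⟩|⟨h,_⟩|⟨h,_⟩ <;> first | exact h1 | omega
    exact (hy2 i j).2 (by rw [ei, ej]; exact hx2 hij)
  have qBH : ∀ i j, i < j → qr i = 1 → qr j = 1 → l.get i < l.get j := by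
    intro i j hij hi hj
    have ei : (qd i).2 = (qd i).1 + 1 := by
      rcases qrspec i with ⟨h,_⟩|⟨h,_,_,_,h1⟩|⟨h,_⟩|⟨h,_⟩|⟨h,_⟩ <;> first | exact h1 | omega
    have ej : (qd j).2 = (qd j).1 + 1 := by
      rcases qrspec j with ⟨h,_⟩|⟨h,_,_,_,h1⟩|⟨h,_⟩|⟨h,_⟩|⟨h,_⟩ <;> first | exact h1 | omega
    refine (hy2 i j).2 ?_
    rw [ei, ej]
    have := hx2 hij
    linarith
  have qBT : ∀ i j, i < j → qr i = 3 → qr j = 3 → l.get i < l.get j := by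
    intro i j hij hi hj
    have ei : (qd i).2 = (qd i).1 - 1 := by
      rcases qrspec i with ⟨h,_⟩|⟨h,_⟩|⟨h,_⟩|⟨h,_,_,_,_,h1⟩|⟨h,_⟩ <;> first | exact h1 | omega
    have ej : (qd j).2 = (qd j).1 - 1 := by
      rcases qrspec j with ⟨h,_⟩|⟨h,_⟩|⟨h,_⟩|⟨h,_,_,_,_,h1⟩|⟨h,_⟩ <;> first | exact h1 | omega
    refine (hy2 i j).2 ?_
    rw [ei, ej]
    have := hx2 hij
    linarith
  have qCH : ∀ i j, i < j → qr i = 2 → qr j = 2 → l.get j < l.get i := by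
    intro i j hij hi hj
    have ei : (qd i).2 = 4 - (qd i).1 := by
      rcases qrspec i with ⟨h,_⟩|⟨h,_⟩|⟨h,_,_,_,_,h1⟩|⟨h,_⟩|⟨h,_⟩ <;> first | exact h1 | omega
    have ej : (qd j).2 = 4 - (qd j).1 := by
      rcases qrspec j with ⟨h,_⟩|⟨h,_⟩|⟨h,_,_,_,_,h1⟩|⟨h,_⟩|⟨h,_⟩ <;> first | exact h1 | omega
    refine (hy2 j i).2 ?_
    rw [ei, ej]
    have := hx2 hij
    linarith
  have qCT : ∀ i j, i < j → qr i = 4 → qr j = 4 → l.get j < l.get i := by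
    intro i j hij hi hj
    have ei : (qd i).2 = 4 - (qd i).1 := by
      rcases qrspec i with ⟨h,_⟩|⟨h,_⟩|⟨h,_⟩|⟨h,_⟩|⟨h,_,_,h1⟩ <;> first | exact h1 | omega
    have ej : (qd j).2 = 4 - (qd j).1 := by
      rcases qrspec j with ⟨h,_⟩|⟨h,_⟩|⟨h,_⟩|⟨h,_⟩|⟨h,_,_,h1⟩ <;> first | exact h1 | omega
    refine (hy2 j i).2 ?_
    rw [ei, ej]
    have := hx2 hij
    linarith
  have qylow : ∀ i, qr i = 4 → (qd i).2 ≤ 1 := by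
    intro i hi
    rcases qrspec i with ⟨h,_⟩|⟨h,_⟩|⟨h,_⟩|⟨h,_⟩|⟨h,_,h1,_⟩ <;> first | exact h1 | omega
  have qyCH : ∀ i, qr i = 2 → 1 < (qd i).2 ∧ (qd i).2 < 2 := by
    intro i hi
    rcases qrspec i with ⟨h,_⟩|⟨h,_⟩|⟨h,_,_,h1,h2,_⟩|⟨h,_⟩|⟨h,_⟩ <;> first | exact ⟨h1,h2⟩ | omega
  have qyBT : ∀ i, qr i = 3 → 2 ≤ (qd i).2 ∧ (qd i).2 ≤ 3 := by
    intro i hi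
    rcases qrspec i with ⟨h,_⟩|⟨h,_⟩|⟨h,_⟩|⟨h,_,_,h1,h2,_⟩|⟨h,_⟩ <;> first | exact ⟨h1,h2⟩ | omega
  have qyBH : ∀ i, qr i = 1 → 3 ≤ (qd i).2 := by
    intro i hi
    rcases qrspec i with ⟨h,_⟩|⟨h,_,_,h1,_⟩|⟨h,_⟩|⟨h,_⟩|⟨h,_⟩ <;> first | exact h1 | omega
  have qyE : ∀ i, qr i = 0 → (qd i).2 ≤ 2 := by
    intro i hi
    rcases qrspec i with ⟨h,h1,_,h2⟩|⟨h,_⟩|⟨h,_⟩|⟨h,_⟩|⟨h,_⟩ <;>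
      first | (rw [h1]; exact h2) | omega
  have hqne : ∀ (i j : Fin l.length) (a b : ℕ), qr i = a → qr j = b → a ≠ b → i ≠ j := by
    intro i j a b ha hb hab he
    subst he
    omega
  have qV1 : ∀ i j, qr i = 4 → qr j = 2 → l.get i < l.get j := by
    intro i j hi hj
    have := qylow i hi; have := qyCH j hj
    exact (hy2 i j).2 (by linarith [(qyCH j hj).1])
  have qV2 : ∀ i j, qr i = 2 → qr j = 3 → l.get i < l.get j := by
    intro i j hi hj
    exact (hy2 i j).2 (by linarith [(qyCH i hi).2, (qyBT j hj).1])
  have qV3 : ∀ i j, qr i = 4 → qr j = 3 → l.get i < l.get j := by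
    intro i j hi hj
    exact (hy2 i j).2 (by linarith [qylow i hi, (qyBT j hj).1])
  have qV4 : ∀ i j, qr i = 3 → qr j = 1 → l.get i < l.get j := by
    intro i j hi hj
    refine (hy2 i j).2 (lt_of_le_of_ne ?_ (hyne2 i j (hqne i j 3 1 hi hj (by omega))))
    linarith [(qyBT i hi).2, qyBH j hj]
  have qV5 : ∀ i j, qr i = 0 → qr j = 3 → l.get i < l.get j := by
    intro i j hi hj
    refine (hy2 i j).2 (lt_of_le_of_ne ?_ (hyne2 i j (hqne i j 0 3 hi hj (by omega))))
    linarith [qyE i hi, (qyBT j hj).1]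
  have qV6 : ∀ i j, qr i = 0 → qr j = 1 → l.get i < l.get j := by
    intro i j hi hj
    exact (hy2 i j).2 (by linarith [qyE i hi, qyBH j hj])
  have qV7 : ∀ i j, qr i = 2 → qr j = 1 → l.get i < l.get j := by
    intro i j hi hj
    exact (hy2 i j).2 (by linarith [(qyCH i hi).2, qyBH j hj])
  have qV8 : ∀ i j, qr i = 4 → qr j = 1 → l.get i < l.get j := by
    intro i j hi hj
    exact (hy2 i j).2 (by linarith [qylow i hi, qyBH j hj])
  exact core l hinj pr qr p0 p1 p2 pA pB pC pD pV q0 q1 q2 qE qBH qBT qCH qCT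
    qV1 qV2 qV3 qV4 qV5 qV6 qV7 qV8


/-- `G3 = G1 ∩ G2`. -/
theorem g3_eq_g1_inter_g2 (l : List ℕ) (hl : IsPermList l) :
    DrawnOn l G3fig ↔ DrawnOn l G1fig ∧ DrawnOn l G2fig := by
  exact ⟨fun h => forward l h, fun ⟨h1, h2⟩ => backward l hl h1 h2⟩
end

section
/- A permutation π avoiding both 3124 and 4312 is skew decomposable if and only if π = σ⊖τ where either σ is a nonempty increasing permutation and τ is a nonempty permutation avoiding 312, or σ is a skew indecomposable permutation avoiding both 3124 and 4312 and τ is a nonempty decreasing permutation. That is, the set of skew decomposable permutations in Av(3124,4312) equals (Av(21) ⊖ Av(312)) ∪ (Av_{skew-indecomposable}(3124,4312) ⊖ Av(12)), where both operands of each ⊖ range over nonempty permutations. -/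
lemma pskew_length (σ τ : List ℕ) : (pskew σ τ).length = σ.length + τ.length := by
  simp [pskew]

lemma pskew_getElem_left (σ τ : List ℕ) (i : ℕ) (h : i < σ.length)
    (h' : i < (pskew σ τ).length) :
    (pskew σ τ)[i] = σ[i] + τ.length := by
  simp [pskew, List.getElem_append_left, h]

lemma pskew_getElem_right (σ τ : List ℕ) (i : ℕ) (h : σ.length ≤ i)
    (h' : i < (pskew σ τ).length) :
    (pskew σ τ)[i] = τ[i - σ.length]'(by rw [pskew_length] at h'; omega) := by
  simp only [pskew]
  rw [List.getElem_append_right (by simpa using h)]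
  simp

lemma boundary {s t : ℕ} : ∀ {n : ℕ} (f : Fin n → Fin (s + t)), StrictMono f →
    ∃ k ≤ n, ∀ i : Fin n, ((i : ℕ) < k ↔ (f i : ℕ) < s) := by
  intro n
  induction n with
  | zero => exact fun f _ => ⟨0, le_refl 0, fun i => i.elim0⟩
  | succ n ih =>
    intro f hf
    obtain ⟨k, hk, hb⟩ := ih (f ∘ Fin.succ) (hf.comp (Fin.strictMono_succ))
    by_cases h0 : (f 0 : ℕ) < s
    · refine ⟨k + 1, by omega, fun i => ?_⟩
      refine Fin.cases ?_ ?_ i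
      · simpa using h0
      · intro j
        have := hb j
        simp only [Function.comp] at this
        simp [Fin.val_succ]
        omega
    · refine ⟨0, by omega, fun i => ?_⟩
      have : f 0 ≤ f i := hf.monotone (by simp [Fin.le_def])
      rw [Fin.le_def] at this
      simp
      omega

lemma contains_trans {l p q : List ℕ} (h1 : Contains l p) (h2 : Contains p q) :
    Contains l q := by
  obtain ⟨f, hf, hif⟩ := h1
  obtain ⟨g, hg, hig⟩ := h2
  exact ⟨f ∘ g, hf.comp hg, fun a b => (hig a b).trans (hif (g a) (g b))⟩

lemma contains_of_witness {l p : List ℕ} (f : Fin p.length → Fin l.length)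
    (h1 : ∀ a b, a < b → f a < f b)
    (h2 : ∀ a b, p.get a < p.get b ↔ l.get (f a) < l.get (f b)) : Contains l p :=
  ⟨f, fun _ _ h => h1 _ _ h, h2⟩

lemma isPermList_pskew {σ τ : List ℕ} (hσ : IsPermList σ) (hτ : IsPermList τ) :
    IsPermList (pskew σ τ) := by
  unfold IsPermList at *
  rw [pskew_length, Nat.add_comm, List.range_add]
  have h1 : pskew σ τ = σ.map (· + τ.length) ++ τ := rfl
  rw [h1]
  refine ((hσ.map (· + τ.length)).append hτ).trans ?_
  refine (List.perm_append_comm).trans ?_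
  apply List.Perm.append_left
  have : ((· + τ.length) : ℕ → ℕ) = (τ.length + ·) := by funext x; omega
  rw [this]

lemma mem_lt_of_perm {l : List ℕ} (h : IsPermList l) {x : ℕ} (hx : x ∈ l) : x < l.length := by
  have := h.mem_iff.mp hx
  simpa using this

lemma contains_pskew_split {σ τ p : List ℕ} (hτ : ∀ x ∈ τ, x < τ.length)
    (h : Contains (pskew σ τ) p) :
    ∃ k ≤ p.length, Contains σ (p.take k) ∧ Contains τ (p.drop k) ∧
      ∀ a b : Fin p.length, (a : ℕ) < k → k ≤ (b : ℕ) → p.get b < p.get a := by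
  obtain ⟨f, hf, hiso⟩ := h
  let f' : Fin p.length → Fin (σ.length + τ.length) :=
    fun i => Fin.cast (pskew_length σ τ) (f i)
  have hcast : ∀ i, (f' i : ℕ) = (f i : ℕ) := fun i => rfl
  have hf' : StrictMono f' := by
    intro a b hab
    have := hf hab
    rw [Fin.lt_def] at this ⊢
    rw [hcast, hcast]
    exact this
  obtain ⟨k, hk, hb⟩ := boundary f' hf'
  have hvl : ∀ (i : Fin p.length) (hi : (f' i : ℕ) < σ.length),
      (pskew σ τ).get (f i) = σ[(f' i : ℕ)]'hi + τ.length := by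
    intro i hi
    rw [List.get_eq_getElem]
    exact pskew_getElem_left _ _ _ hi _
  have hvr : ∀ (i : Fin p.length) (hi : σ.length ≤ (f' i : ℕ)),
      (pskew σ τ).get (f i) =
        τ[(f' i : ℕ) - σ.length]'(by have := (f' i).isLt; omega) := by
    intro i hi
    rw [List.get_eq_getElem]
    exact pskew_getElem_right _ _ _ hi _
  refine ⟨k, hk, ?_, ?_, ?_⟩
  · -- Contains σ (p.take k)
    have hlen : (p.take k).length = k := by simp [List.length_take]; omega
    have hidx : ∀ i : Fin (p.take k).length, (i : ℕ) < p.length := by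
      intro i; have := i.2; omega
    have hik : ∀ i : Fin (p.take k).length, ((⟨i, hidx i⟩ : Fin p.length) : ℕ) < k := by
      intro i; show (i : ℕ) < k; have := i.2; omega
    refine ⟨fun i => ⟨(f' ⟨i, hidx i⟩ : ℕ), (hb _).mp (hik i)⟩, ?_, ?_⟩
    · intro a b hab
      have h2 : f' ⟨a, hidx a⟩ < f' ⟨b, hidx b⟩ :=
        hf' (Fin.mk_lt_mk.mpr (Fin.lt_def.mp hab))
      exact Fin.mk_lt_mk.mpr (Fin.lt_def.mp h2)
    · intro a b
      have hg : ∀ x : Fin (p.take k).length, (p.take k).get x = p.get ⟨x, hidx x⟩ := by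
        intro x
        rw [List.get_eq_getElem, List.get_eq_getElem]
        exact List.getElem_take
      rw [hg a, hg b, hiso ⟨a, hidx a⟩ ⟨b, hidx b⟩,
        hvl _ ((hb _).mp (hik a)), hvl _ ((hb _).mp (hik b))]
      simp
  · -- Contains τ (p.drop k)
    have hlen : (p.drop k).length = p.length - k := by simp
    have hidx : ∀ i : Fin (p.drop k).length, k + (i : ℕ) < p.length := by
      intro i; have := i.2; omega
    have hik : ∀ i : Fin (p.drop k).length,
        σ.length ≤ (f' ⟨k + i, hidx i⟩ : ℕ) := by
      intro i
      by_contra hc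
      push_neg at hc
      have h2 : k + (i : ℕ) < k := (hb ⟨k + i, hidx i⟩).mpr hc
      omega
    refine ⟨fun i => ⟨(f' ⟨k + i, hidx i⟩ : ℕ) - σ.length,
      by have := (f' ⟨k + i, hidx i⟩).isLt; have := hik i; omega⟩, ?_, ?_⟩
    · intro a b hab
      have hab' : (a : ℕ) < (b : ℕ) := Fin.lt_def.mp hab
      have h2 : f' ⟨k + a, hidx a⟩ < f' ⟨k + b, hidx b⟩ :=
        hf' (Fin.mk_lt_mk.mpr (by omega))
      have h2' := Fin.lt_def.mp h2
      have h3 := hik a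
      exact Fin.mk_lt_mk.mpr (by omega)
    · intro a b
      have hg : ∀ x : Fin (p.drop k).length, (p.drop k).get x = p.get ⟨k + x, hidx x⟩ := by
        intro x
        rw [List.get_eq_getElem, List.get_eq_getElem]
        exact List.getElem_drop
      rw [hg a, hg b, hiso ⟨k + a, hidx a⟩ ⟨k + b, hidx b⟩,
        hvr _ (hik a), hvr _ (hik b)]
      exact Iff.rfl
  · -- cross
    intro a b ha hbk
    have hbs : σ.length ≤ (f' b : ℕ) := by
      by_contra hc
      push_neg at hc
      have := (hb b).mpr hc
      omega
    rw [hiso b a, hvl a ((hb a).mp ha), hvr b hbs]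
    have htb : ∀ (j : ℕ) (hj : j < τ.length), τ[j]'hj < τ.length := by
      intro j hj
      exact hτ _ (List.getElem_mem hj)
    exact lt_of_lt_of_le (htb _ _) (Nat.le_add_left _ _)

lemma contains_pskew_glue {σ τ a b : List ℕ} (hbb : ∀ x ∈ b, x < b.length)
    (hτb : ∀ x ∈ τ, x < τ.length) (h1 : Contains σ a) (h2 : Contains τ b) :
    Contains (pskew σ τ) (pskew a b) := by
  obtain ⟨f, hf, hif⟩ := h1
  obtain ⟨g, hg, hig⟩ := h2
  have hla : (pskew a b).length = a.length + b.length := pskew_length a b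
  have hlσ : (pskew σ τ).length = σ.length + τ.length := pskew_length σ τ
  have hgi : ∀ (i : Fin (pskew a b).length) (hi : ¬ ((i : ℕ) < a.length)),
      (i : ℕ) - a.length < b.length := by
    intro i hi; have := i.isLt; omega
  refine ⟨fun i => if hi : (i : ℕ) < a.length
      then ⟨(f ⟨i, hi⟩ : ℕ), by have := (f ⟨i, hi⟩).isLt; omega⟩
      else ⟨σ.length + (g ⟨(i : ℕ) - a.length, hgi i hi⟩ : ℕ),
        by have := (g ⟨(i : ℕ) - a.length, hgi i hi⟩).isLt; omega⟩, ?_, ?_⟩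
  · intro x y hxy
    have hxy' : (x : ℕ) < (y : ℕ) := Fin.lt_def.mp hxy
    by_cases hx : (x : ℕ) < a.length <;> by_cases hy : (y : ℕ) < a.length
    · simp only [dif_pos hx, dif_pos hy]
      exact Fin.mk_lt_mk.mpr (Fin.lt_def.mp (hf (Fin.mk_lt_mk.mpr hxy')))
    · simp only [dif_pos hx, dif_neg hy]
      exact Fin.mk_lt_mk.mpr (by have := (f ⟨x, hx⟩).isLt; omega)
    · omega
    · simp only [dif_neg hx, dif_neg hy]
      refine Fin.mk_lt_mk.mpr ?_
      have := Fin.lt_def.mp (@hg ⟨(x : ℕ) - a.length, hgi x hx⟩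
        ⟨(y : ℕ) - a.length, hgi y hy⟩ (Fin.mk_lt_mk.mpr (by omega)))
      omega
  · intro x y
    have hvab : ∀ (i : Fin (pskew a b).length),
        (pskew a b).get i = if hi : (i : ℕ) < a.length
          then a[(i : ℕ)]'hi + b.length
          else b[(i : ℕ) - a.length]'(hgi i hi) := by
      intro i
      rw [List.get_eq_getElem]
      by_cases hi : (i : ℕ) < a.length
      · rw [dif_pos hi]; exact pskew_getElem_left _ _ _ hi _
      · rw [dif_neg hi]; exact pskew_getElem_right _ _ _ (by omega) _
    have hab : ∀ (j : ℕ) (hj : j < b.length), b[j]'hj < b.length := fun j hj =>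
      hbb _ (List.getElem_mem hj)
    have hat : ∀ (j : ℕ) (hj : j < τ.length), τ[j]'hj < τ.length := fun j hj =>
      hτb _ (List.getElem_mem hj)
    rw [hvab x, hvab y]
    by_cases hx : (x : ℕ) < a.length <;> by_cases hy : (y : ℕ) < a.length
    · simp only [dif_pos hx, dif_pos hy]
      have := hif ⟨x, hx⟩ ⟨y, hy⟩
      simp only [List.get_eq_getElem, Fin.val_mk] at this
      simp only [List.get_eq_getElem]
      rw [pskew_getElem_left _ _ _ (f ⟨x, hx⟩).isLt,
        pskew_getElem_left _ _ _ (f ⟨y, hy⟩).isLt]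
      constructor
      · intro hlt
        have := this.mp (by omega)
        omega
      · intro hlt
        have := this.mpr (by omega)
        omega
    · simp only [dif_pos hx, dif_neg hy]
      simp only [List.get_eq_getElem]
      rw [pskew_getElem_left _ _ _ (f ⟨x, hx⟩).isLt,
        pskew_getElem_right _ _ _ (Nat.le_add_right _ _) _]
      simp only [Nat.add_sub_cancel_left]
      exact iff_of_false
        (Nat.not_lt.mpr (le_trans (hab _ _).le (Nat.le_add_left _ _)))
        (Nat.not_lt.mpr (le_trans (hat _ _).le (Nat.le_add_left _ _)))
    · simp only [dif_neg hx, dif_pos hy]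
      simp only [List.get_eq_getElem]
      rw [pskew_getElem_right _ _ _ (Nat.le_add_right _ _) _,
        pskew_getElem_left _ _ _ (f ⟨y, hy⟩).isLt]
      simp only [Nat.add_sub_cancel_left]
      exact iff_of_true
        (lt_of_lt_of_le (hab _ _) (Nat.le_add_left _ _))
        (lt_of_lt_of_le (hat _ _) (Nat.le_add_left _ _))
    · simp only [dif_neg hx, dif_neg hy]
      have := hig ⟨(x : ℕ) - a.length, hgi x hx⟩ ⟨(y : ℕ) - a.length, hgi y hy⟩
      simp only [List.get_eq_getElem, Fin.val_mk] at this
      simp only [List.get_eq_getElem]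
      rw [pskew_getElem_right _ _ _ (Nat.le_add_right _ _) _,
        pskew_getElem_right _ _ _ (Nat.le_add_right _ _) _]
      simp only [Nat.add_sub_cancel_left]
      exact this

lemma contains_pskew_left {σ τ p : List ℕ} (h : Contains σ p) :
    Contains (pskew σ τ) p := by
  obtain ⟨f, hf, hif⟩ := h
  refine ⟨fun i => ⟨(f i : ℕ), by rw [pskew_length]; have := (f i).isLt; omega⟩, ?_, ?_⟩
  · intro x y hxy
    exact Fin.mk_lt_mk.mpr (Fin.lt_def.mp (hf hxy))
  · intro x y
    rw [hif x y]
    simp only [List.get_eq_getElem]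
    rw [pskew_getElem_left _ _ _ (f x).isLt, pskew_getElem_left _ _ _ (f y).isLt]
    omega

lemma contains_pskew_right {σ τ p : List ℕ} (h : Contains τ p) :
    Contains (pskew σ τ) p := by
  obtain ⟨f, hf, hif⟩ := h
  refine ⟨fun i => ⟨σ.length + (f i : ℕ),
    by rw [pskew_length]; have := (f i).isLt; omega⟩, ?_, ?_⟩
  · intro x y hxy
    exact Fin.mk_lt_mk.mpr (by have := Fin.lt_def.mp (hf hxy); omega)
  · intro x y
    rw [hif x y]
    simp only [List.get_eq_getElem]
    rw [pskew_getElem_right _ _ _ (Nat.le_add_right _ _) _,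
      pskew_getElem_right _ _ _ (Nat.le_add_right _ _) _]
    simp only [Nat.add_sub_cancel_left]

lemma pskew_assoc (a b c : List ℕ) : pskew (pskew a b) c = pskew a (pskew b c) := by
  simp only [pskew, pskew_length, List.map_append, List.map_map, List.append_assoc,
    List.length_append, List.length_map]
  congr 1
  · congr 1
    funext x
    simp [Function.comp]
    omega

lemma pskew_ne_nil {σ τ : List ℕ} (h : τ ≠ []) : pskew σ τ ≠ [] := by
  intro hc
  have h1 : (pskew σ τ).length = 0 := by rw [hc]; rfl
  rw [pskew_length] at h1
  have h2 := List.length_pos_iff.mpr h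
  omega

lemma exists_indec : ∀ (n : ℕ) (σ : List ℕ), σ.length ≤ n → IsPermList σ → σ ≠ [] →
    ∀ τ : List ℕ, IsPermList τ → τ ≠ [] →
    ∃ α ρ : List ℕ, IsPermList α ∧ α ≠ [] ∧ ¬ SkewDecomposable α ∧
      IsPermList ρ ∧ ρ ≠ [] ∧ pskew σ τ = pskew α ρ := by
  intro n
  induction n with
  | zero =>
    intro σ hlen hσ hne
    exact absurd (List.length_eq_zero_iff.mp (by omega)) hne
  | succ n ih =>
    intro σ hlen hσ hne τ hτ hτne
    by_cases hd : SkewDecomposable σ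
    · obtain ⟨a, b, ha, hb, hane, hbne, heq⟩ := hd
      have hlab : σ.length = a.length + b.length := by rw [heq, pskew_length]
      have hbpos : 0 < b.length := List.length_pos_iff.mpr hbne
      have hsub : a.length ≤ n := by omega
      obtain ⟨α, ρ, h1, h2, h3, h4, h5, h6⟩ :=
        ih a hsub ha hane (pskew b τ) (isPermList_pskew hb hτ) (pskew_ne_nil hτne)
      exact ⟨α, ρ, h1, h2, h3, h4, h5, by rw [heq, pskew_assoc, h6]⟩
    · exact ⟨σ, τ, hσ, hne, hd, hτ, hτne, rfl⟩

lemma contains_shift {l p : List ℕ} (d : ℕ) (hd : ∀ i : Fin p.length, (i : ℕ) + d < l.length)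
    (h2 : ∀ a b : Fin p.length, p.get a < p.get b ↔
      l.get ⟨(a : ℕ) + d, hd a⟩ < l.get ⟨(b : ℕ) + d, hd b⟩) : Contains l p :=
  contains_of_witness (fun i => ⟨(i : ℕ) + d, hd i⟩)
    (fun a b hab => Fin.mk_lt_mk.mpr (by have := Fin.lt_def.mp hab; omega)) h2

lemma contains_single {σ : List ℕ} (h : σ ≠ []) : Contains σ [0] :=
  contains_of_witness (fun _ => ⟨0, List.length_pos_iff.mpr h⟩)
    (fun a b hab => by
      have h1 := a.isLt
      have h2 := b.isLt
      have h3 := Fin.lt_def.mp hab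
      simp only [List.length_cons, List.length_nil] at h1 h2
      omega)
    (fun a b => by
      have ha : a = b := by
        have h1 := a.isLt
        have h2 := b.isLt
        simp only [List.length_cons, List.length_nil] at h1 h2
        exact Fin.ext (by omega)
      subst ha
      simp)

lemma c4_a : Contains [2,0,1,3] [2,0,1] :=
  contains_shift 0 (fun i => by have h := i.isLt; simp only [List.length_cons, List.length_nil] at h ⊢; omega) (by decide)
lemma c4_b : Contains [2,0] [1,0] :=
  contains_shift 0 (fun i => by have h := i.isLt; simp only [List.length_cons, List.length_nil] at h ⊢; omega) (by decide)
lemma c4_c : Contains [2,0,1] [1,0] :=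
  contains_shift 0 (fun i => by have h := i.isLt; simp only [List.length_cons, List.length_nil] at h ⊢; omega) (by decide)
lemma c4_d : Contains [2,0,1,3] [1,0] :=
  contains_shift 0 (fun i => by have h := i.isLt; simp only [List.length_cons, List.length_nil] at h ⊢; omega) (by decide)
lemma c4_e : Contains [3,2,0,1] [2,0,1] :=
  contains_shift 1 (fun i => by have h := i.isLt; simp only [List.length_cons, List.length_nil] at h ⊢; omega) (by decide)
lemma c4_f : Contains [3,2] [1,0] :=
  contains_shift 0 (fun i => by have h := i.isLt; simp only [List.length_cons, List.length_nil] at h ⊢; omega) (by decide)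
lemma c4_g : Contains [3,2,0] [1,0] :=
  contains_shift 0 (fun i => by have h := i.isLt; simp only [List.length_cons, List.length_nil] at h ⊢; omega) (by decide)
lemma c4_h : Contains [3,2,0,1] [1,0] :=
  contains_shift 0 (fun i => by have h := i.isLt; simp only [List.length_cons, List.length_nil] at h ⊢; omega) (by decide)
lemma c4_i : Contains [2,0,1,3] [0,1] :=
  contains_shift 1 (fun i => by have h := i.isLt; simp only [List.length_cons, List.length_nil] at h ⊢; omega) (by decide)
lemma c4_j : Contains [1,3] [0,1] :=
  contains_shift 0 (fun i => by have h := i.isLt; simp only [List.length_cons, List.length_nil] at h ⊢; omega) (by decide)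
lemma c4_k : Contains [3,2,0,1] [0,1] :=
  contains_shift 2 (fun i => by have h := i.isLt; simp only [List.length_cons, List.length_nil] at h ⊢; omega) (by decide)
lemma c4_l : Contains [2,0,1] [0,1] :=
  contains_shift 1 (fun i => by have h := i.isLt; simp only [List.length_cons, List.length_nil] at h ⊢; omega) (by decide)

lemma avoids_A1 {σ τ : List ℕ} (hτb : ∀ x ∈ τ, x < τ.length)
    (h1 : Avoids σ [1,0]) (h2 : Avoids τ [2,0,1]) :
    Avoids (pskew σ τ) [2,0,1,3] := by
  intro hc
  obtain ⟨k, hk, htk, hdk, hcross⟩ := contains_pskew_split hτb hc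
  have hk4 : k ≤ 4 := by simpa using hk
  interval_cases k
  · exact h2 (contains_trans hdk c4_a)
  · exact absurd (hcross ⟨0, by decide⟩ ⟨3, by decide⟩ (by decide) (by decide)) (by decide)
  · exact h1 (contains_trans htk c4_b)
  · exact h1 (contains_trans htk c4_c)
  · exact h1 (contains_trans htk c4_d)

lemma avoids_A2 {σ τ : List ℕ} (hτb : ∀ x ∈ τ, x < τ.length)
    (h1 : Avoids σ [1,0]) (h2 : Avoids τ [2,0,1]) :
    Avoids (pskew σ τ) [3,2,0,1] := by
  intro hc
  obtain ⟨k, hk, htk, hdk, hcross⟩ := contains_pskew_split hτb hc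
  have hk4 : k ≤ 4 := by simpa using hk
  interval_cases k
  · exact h2 (contains_trans hdk c4_e)
  · exact h2 hdk
  · exact h1 (contains_trans htk c4_f)
  · exact h1 (contains_trans htk c4_g)
  · exact h1 (contains_trans htk c4_h)

lemma avoids_B1 {σ τ : List ℕ} (hτb : ∀ x ∈ τ, x < τ.length)
    (h1 : Avoids σ [2,0,1,3]) (h2 : Avoids τ [0,1]) :
    Avoids (pskew σ τ) [2,0,1,3] := by
  intro hc
  obtain ⟨k, hk, htk, hdk, hcross⟩ := contains_pskew_split hτb hc
  have hk4 : k ≤ 4 := by simpa using hk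
  interval_cases k
  · exact h2 (contains_trans hdk c4_i)
  · exact absurd (hcross ⟨0, by decide⟩ ⟨3, by decide⟩ (by decide) (by decide)) (by decide)
  · exact h2 (contains_trans hdk c4_j)
  · exact absurd (hcross ⟨0, by decide⟩ ⟨3, by decide⟩ (by decide) (by decide)) (by decide)
  · exact h1 htk

lemma avoids_B2 {σ τ : List ℕ} (hτb : ∀ x ∈ τ, x < τ.length)
    (h1 : Avoids σ [3,2,0,1]) (h2 : Avoids τ [0,1]) :
    Avoids (pskew σ τ) [3,2,0,1] := by
  intro hc
  obtain ⟨k, hk, htk, hdk, hcross⟩ := contains_pskew_split hτb hc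
  have hk4 : k ≤ 4 := by simpa using hk
  interval_cases k
  · exact h2 (contains_trans hdk c4_k)
  · exact h2 (contains_trans hdk c4_l)
  · exact h2 hdk
  · exact absurd (hcross ⟨2, by decide⟩ ⟨3, by decide⟩ (by decide) (by decide)) (by decide)
  · exact h1 htk

/-- structure of the skew decomposable permutations in
`Av(3124, 4312)`. -/
theorem skew_decomposable_structure :
    {l : List ℕ | IsPermList l ∧ Avoids l [2,0,1,3] ∧ Avoids l [3,2,0,1] ∧
      SkewDecomposable l}
    = {l : List ℕ |
        (∃ σ τ : List ℕ, IsPermList σ ∧ σ ≠ [] ∧ Avoids σ [1,0] ∧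
          IsPermList τ ∧ τ ≠ [] ∧ Avoids τ [2,0,1] ∧ l = pskew σ τ) ∨
        (∃ σ τ : List ℕ, IsPermList σ ∧ σ ≠ [] ∧ Avoids σ [2,0,1,3] ∧ Avoids σ [3,2,0,1] ∧
          ¬ SkewDecomposable σ ∧ IsPermList τ ∧ τ ≠ [] ∧ Avoids τ [0,1] ∧
          l = pskew σ τ)} := by
  ext l
  simp only [Set.mem_setOf_eq]
  constructor
  · rintro ⟨hperm, hav1, hav2, hsd⟩
    obtain ⟨σ0, τ0, hσ0, hτ0, hσ0ne, hτ0ne, heq⟩ := hsd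
    obtain ⟨α, ρ, hα, hαne, hαind, hρ, hρne, heq2⟩ :=
      exists_indec σ0.length σ0 le_rfl hσ0 hσ0ne τ0 hτ0 hτ0ne
    have heql : l = pskew α ρ := by rw [heq, heq2]
    have hρb : ∀ x ∈ ρ, x < ρ.length := fun x hx => mem_lt_of_perm hρ hx
    have havα1 : Avoids α [2,0,1,3] := fun hc =>
      hav1 (by rw [heql]; exact contains_pskew_left hc)
    have havα2 : Avoids α [3,2,0,1] := fun hc =>
      hav2 (by rw [heql]; exact contains_pskew_left hc)
    by_cases hcα : Contains α [1,0]
    · right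
      refine ⟨α, ρ, hα, hαne, havα1, havα2, hαind, hρ, hρne, ?_, heql⟩
      intro hcρ
      apply hav2
      rw [heql]
      exact contains_pskew_glue (b := [0,1]) (by decide) hρb hcα hcρ
    · left
      refine ⟨α, ρ, hα, hαne, hcα, hρ, hρne, ?_, heql⟩
      intro hcρ
      apply hav2
      rw [heql]
      exact contains_pskew_glue (b := [2,0,1]) (by decide) hρb (contains_single hαne) hcρ
  · rintro (⟨σ, τ, hσ, hσne, hσ10, hτ, hτne, hτ201, heq⟩ |
      ⟨σ, τ, hσ, hσne, hσ1, hσ2, hσind, hτ, hτne, hτ01, heq⟩)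
    · subst heq
      have hτb : ∀ x ∈ τ, x < τ.length := fun x hx => mem_lt_of_perm hτ hx
      exact ⟨isPermList_pskew hσ hτ, avoids_A1 hτb hσ10 hτ201,
        avoids_A2 hτb hσ10 hτ201, σ, τ, hσ, hτ, hσne, hτne, rfl⟩
    · subst heq
      have hτb : ∀ x ∈ τ, x < τ.length := fun x hx => mem_lt_of_perm hτ hx
      exact ⟨isPermList_pskew hσ hτ, avoids_B1 hτb hσ1 hτ01,
        avoids_B2 hτb hσ2 hτ01, σ, τ, hσ, hτ, hσne, hτne, rfl⟩
end
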